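/- arXiv:2409.16483 — 4 statements merged into one kernel-verified Lean document; each statement's English description precedes it below -/
import Mathlib

section
/- If λ, λ' belong to the closed fundamental alcove 𝒜₀ of an irreducible root system and λ − λ' lies in the coroot lattice Q^∨, then λ = λ'. -/
open scoped RealInnerProductSpace Pointwise

noncomputable section

variable (E : Type) [NormedAddCommGroup E] [InnerProductSpace ℝ E] [FiniteDimensional ℝ E]

/-- The coroot `x^∨ = 2x/⟪x,x⟫` of a vector, under the identification of `V` with `V*`
via the inner product. -/
def coroot (x : E) : E := (2 / ⟪x, x⟫) • x

/-- Data of an irreducible reduced root system `Φ` in a Euclidean space `E`,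
together with a system of simple roots `α i`, the highest root `α₀` with its coefficients
`n i`, and the fundamental coweights `ϖ i`. -/
structure KPData (r : ℕ) where
  Φ : Finset E
  Φ_nonempty : Φ.Nonempty
  root_ne_zero : ∀ x ∈ Φ, x ≠ (0 : E)
  span_eq_top : Submodule.span ℝ (Φ : Set E) = ⊤
  reduced : ∀ x ∈ Φ, ∀ t : ℝ, t • x ∈ Φ → t = 1 ∨ t = -1
  integrality : ∀ x ∈ Φ, ∀ y ∈ Φ, ∃ m : ℤ, ⟪coroot E x, y⟫ = (m : ℝ)
  reflect_mem : ∀ x ∈ Φ, ∀ y ∈ Φ, y - ⟪coroot E x, y⟫ • x ∈ Φ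
  irreducible : ∀ S ⊆ (Φ : Set E), (∀ x ∈ S, ∀ y ∈ (Φ : Set E) \ S, ⟪x, y⟫ = 0) →
    S = ∅ ∨ S = (Φ : Set E)
  α : Fin r → E
  α_mem : ∀ i, α i ∈ Φ
  α_indep : LinearIndependent ℝ α
  pos_or_neg : ∀ x ∈ Φ, (∃ c : Fin r → ℝ, (∀ i, 0 ≤ c i) ∧ x = ∑ i, c i • α i) ∨
    (∃ c : Fin r → ℝ, (∀ i, 0 ≤ c i) ∧ x = -∑ i, c i • α i)
  ϖ : Fin r → E
  ϖ_pair : ∀ i j, ⟪ϖ i, α j⟫ = if i = j then 1 else 0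
  n : Fin r → ℕ
  n_pos : ∀ i, 0 < n i
  α₀ : E
  α₀_mem : α₀ ∈ Φ
  α₀_eq : α₀ = ∑ i, (n i : ℝ) • α i
  α₀_highest : ∀ x ∈ Φ, ∃ c : Fin r → ℝ, (∀ i, 0 ≤ c i) ∧ α₀ - x = ∑ i, c i • α i

namespace KPData

variable {E} {r : ℕ} (D : KPData E r)

/-- The set of positive roots. -/
def posRoots : Set E :=
  {x ∈ (D.Φ : Set E) | ∃ c : Fin r → ℝ, (∀ i, 0 ≤ c i) ∧ x = ∑ i, c i • D.α i}

/-- The closed fundamental alcove `𝒜₀`. -/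
def alcove : Set E := {l | (∀ i, 0 ≤ ⟪l, D.α i⟫) ∧ ⟪l, D.α₀⟫ ≤ 1}

/-- The closed fundamental Weyl chamber `𝒞₀`. -/
def chamber : Set E := {l | ∀ i, 0 ≤ ⟪l, D.α i⟫}

/-- The coroot lattice `Q^∨ = ℤΦ^∨`. -/
def corootLattice : AddSubgroup E := AddSubgroup.closure (coroot E '' (D.Φ : Set E))

/-- The root lattice `Q = ℤΦ`. -/
def rootLattice : AddSubgroup E := AddSubgroup.closure (D.Φ : Set E)

/-- The coweight lattice `P^∨`, spanned by the fundamental coweights. -/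
def coweightLattice : AddSubgroup E := AddSubgroup.closure (Set.range D.ϖ)

/-- The weight lattice `P`. -/
def weightLattice : AddSubgroup E where
  carrier := {x | ∀ y ∈ D.Φ, ∃ m : ℤ, ⟪coroot E y, x⟫ = (m : ℝ)}
  zero_mem' := fun y _ => ⟨0, by simp⟩
  add_mem' := by
    rintro a b ha hb y hy
    obtain ⟨m, hm⟩ := ha y hy
    obtain ⟨m', hm'⟩ := hb y hy
    exact ⟨m + m', by rw [inner_add_right, hm, hm']; push_cast; ring⟩
  neg_mem' := by
    rintro a ha y hy
    obtain ⟨m, hm⟩ := ha y hy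
    exact ⟨-m, by rw [inner_neg_right, hm]; push_cast; ring⟩

/-- The reflection in the hyperplane orthogonal to `x`, as an affine automorphism. -/
def refl (x : E) : E ≃ᵃ[ℝ] E :=
  ((Submodule.reflection (ℝ ∙ x)ᗮ).toLinearEquiv).toAffineEquiv

/-- Translation by a vector, as an affine automorphism. -/
def transl (v : E) : E ≃ᵃ[ℝ] E := AffineEquiv.constVAdd ℝ E v

/-- The finite Weyl group `W`, realized as a group of affine automorphisms. -/
def weylGroup : Subgroup (E ≃ᵃ[ℝ] E) :=
  Subgroup.closure {f | ∃ x ∈ D.Φ, f = refl x}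

/-- The intermediate affine Weyl group `W_Λ = Λ ⋊ W` attached to a lattice `Λ`. -/
def affWeylOf (Λ : AddSubgroup E) : Subgroup (E ≃ᵃ[ℝ] E) :=
  Subgroup.closure ({f | ∃ v ∈ Λ, f = transl v} ∪ {f | ∃ x ∈ D.Φ, f = refl x})

/-- The affine Weyl group `W_a = Q^∨ ⋊ W`. -/
def affWeyl : Subgroup (E ≃ᵃ[ℝ] E) := D.affWeylOf D.corootLattice

/-- The extended affine Weyl group `Ŵ_a = P^∨ ⋊ W`. -/
def extAffWeyl : Subgroup (E ≃ᵃ[ℝ] E) := D.affWeylOf D.coweightLattice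

/-- The stabilizer `Ω` of the fundamental alcove in the extended affine Weyl group. -/
def alcoveStab : Subgroup (E ≃ᵃ[ℝ] E) where
  carrier := {f | f ∈ D.extAffWeyl ∧ f '' D.alcove = D.alcove}
  one_mem' := ⟨one_mem _, by simp [AffineEquiv.coe_one, Set.image_id]⟩
  mul_mem' := by
    rintro a b ⟨ha, ha'⟩ ⟨hb, hb'⟩
    exact ⟨mul_mem ha hb, by rw [AffineEquiv.coe_mul, Set.image_comp, hb', ha']⟩
  inv_mem' := by
    rintro f ⟨hf, hf'⟩
    refine ⟨inv_mem hf, ?_⟩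
    conv_lhs => rw [← hf']
    rw [show ⇑(f⁻¹) = ⇑f.symm from rfl, ← Set.image_comp]
    simp [Function.comp_def]

/-- The Komrakov–Premet polytope `F`. -/
def KP : Set E :=
  {l ∈ D.alcove | ∀ i, D.n i = 1 → ⟪l, D.α₀ + D.α i⟫ ≤ 1}

/-- A closed, connected fundamental domain for a group of affine transformations. -/
def IsFundDom (G : Subgroup (E ≃ᵃ[ℝ] E)) (F : Set E) : Prop :=
  IsClosed F ∧ IsConnected F ∧ (⋃ g ∈ G, (g : E ≃ᵃ[ℝ] E) '' F) = Set.univ ∧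
    ∀ g ∈ G, g ≠ 1 → interior ((g : E ≃ᵃ[ℝ] E) '' F ∩ F) = ∅

/-- The length of a Weyl group element: the number of positive roots sent to negative roots. -/
def len (w : E ≃ᵃ[ℝ] E) : ℕ :=
  Nat.card {x : E // x ∈ D.posRoots ∧ w x ∈ Neg.neg '' D.posRoots}

end KPData

open KPData

variable {E} {r : ℕ}

lemma coroot_inner_self (x : E) (hx : x ≠ 0) : ⟪coroot E x, x⟫ = 2 := by
  have h0 : ⟪x, x⟫ ≠ 0 := inner_self_ne_zero.mpr hx
  rw [coroot, real_inner_smul_left, div_mul_cancel₀ _ h0]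

lemma coroot_neg (x : E) : coroot E (-x) = - coroot E x := by
  rw [coroot, coroot, inner_neg_neg, smul_neg]

lemma KPData.neg_mem (D : KPData E r) {x : E} (hx : x ∈ D.Φ) : -x ∈ D.Φ := by
  have h := D.reflect_mem x hx x hx
  rwa [coroot_inner_self x (D.root_ne_zero x hx),
    show x - (2 : ℝ) • x = -x by rw [two_smul]; abel] at h

lemma KPData.pos_inner_nonneg (D : KPData E r) {μ : E} (hμ : ∀ i, 0 ≤ ⟪μ, D.α i⟫)
    (c : Fin r → ℝ) (hc : ∀ i, 0 ≤ c i) : 0 ≤ ⟪μ, ∑ i, c i • D.α i⟫ := by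
  rw [inner_sum]
  exact Finset.sum_nonneg fun i _ => by
    rw [real_inner_smul_right]; exact mul_nonneg (hc i) (hμ i)

lemma KPData.alcove_inner_le_one (D : KPData E r) {μ x : E} (hμ : μ ∈ D.alcove)
    (hx : x ∈ D.Φ) : ⟪μ, x⟫ ≤ 1 := by
  obtain ⟨c, hc, hcx⟩ := D.α₀_highest x hx
  have h1 : 0 ≤ ⟪μ, D.α₀ - x⟫ := by
    rw [hcx]; exact D.pos_inner_nonneg hμ.1 c hc
  rw [inner_sub_right] at h1
  linarith [hμ.2]

lemma KPData.lattice_inner_int (D : KPData E r) {v : E} (hv : v ∈ D.corootLattice)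
    {x : E} (hx : x ∈ D.Φ) : ∃ m : ℤ, ⟪v, x⟫ = (m : ℝ) := by
  induction hv using AddSubgroup.closure_induction with
  | mem y hy =>
    obtain ⟨z, hz, rfl⟩ := hy
    exact D.integrality z hz x hx
  | zero => exact ⟨0, by simp⟩
  | add a b _ _ ha hb =>
    obtain ⟨m, hm⟩ := ha; obtain ⟨m', hm'⟩ := hb
    exact ⟨m + m', by rw [inner_add_left, hm, hm']; push_cast; ring⟩
  | neg a _ ha =>
    obtain ⟨m, hm⟩ := ha
    exact ⟨-m, by rw [inner_neg_left, hm]; push_cast; ring⟩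

/-- Descent lemma: a sum of coroots whose pairing with every root lies in `[-1, 1] ∩ ℤ`
must vanish. -/
lemma KPData.descent (D : KPData E r) : ∀ n : ℕ, ∀ l : List E, l.length = n →
    (∀ y ∈ l, y ∈ coroot E '' (D.Φ : Set E)) →
    (∀ x ∈ D.Φ, ∃ m : ℤ, ⟪l.sum, x⟫ = (m : ℝ) ∧ (-1 : ℝ) ≤ m ∧ (m : ℝ) ≤ 1) →
    l.sum = 0 := by
  intro n
  induction n using Nat.strong_induction_on with
  | _ n ih =>
    intro l hlen hmem hprop
    classical
    by_contra hv
    set v : E := l.sum with hvdef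
    have hvv : 0 < ⟪v, v⟫ := lt_of_le_of_ne real_inner_self_nonneg (Ne.symm (inner_self_ne_zero.mpr hv))
    -- some element of the list pairs positively with v
    have hsum : ∀ (t : List E), (∀ y ∈ t, ⟪v, y⟫ ≤ 0) → ⟪v, t.sum⟫ ≤ 0 := by
      intro t
      induction t with
      | nil => simp
      | cons a s ihs =>
        intro h
        rw [List.sum_cons, inner_add_right]
        have h1 := ihs fun y hy => h y (List.mem_cons_of_mem a hy)
        have h2 := h a List.mem_cons_self
        linarith
    have hexy : ∃ y ∈ l, 0 < ⟪v, y⟫ := by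
      by_contra hc
      push_neg at hc
      exact absurd (hsum l hc) (by rw [← hvdef]; linarith)
    obtain ⟨y, hyl, hvy⟩ := hexy
    obtain ⟨x, hxΦ, hyx⟩ := hmem y hyl
    have hx0 : x ≠ 0 := D.root_ne_zero x hxΦ
    have hxx : 0 < ⟪x, x⟫ := lt_of_le_of_ne real_inner_self_nonneg (Ne.symm (inner_self_ne_zero.mpr hx0))
    -- pairing of v with the root x is 1
    have hvx : 0 < ⟪v, x⟫ := by
      rw [← hyx, coroot, real_inner_smul_right] at hvy
      nlinarith [div_pos (by norm_num : (0:ℝ) < 2) hxx]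
    obtain ⟨m, hm, hm1, hm2⟩ := hprop x hxΦ
    have hvx1 : ⟪v, x⟫ = 1 := by
      rw [hm] at hvx ⊢
      have : (0 : ℤ) < m := by exact_mod_cast hvx
      have : (1 : ℤ) ≤ m := this
      have : m = 1 := le_antisymm (by exact_mod_cast hm2) this
      rw [this]; norm_num
    -- pass to the shorter list obtained by erasing y
    set l' := l.erase y with hl'
    have hperm : List.Perm l (y :: l') := List.perm_cons_erase hyl
    have hsum' : v = y + l'.sum := by
      rw [hvdef, hperm.sum_eq, List.sum_cons]
    have hlen' : l'.length < n := by
      have := hperm.length_eq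
      rw [hlen] at this
      simp only [List.length_cons] at this
      omega
    have hmem' : ∀ z ∈ l', z ∈ coroot E '' (D.Φ : Set E) :=
      fun z hz => hmem z (List.mem_of_mem_erase hz)
    have hprop' : ∀ x' ∈ D.Φ, ∃ m : ℤ, ⟪l'.sum, x'⟫ = (m : ℝ) ∧
        (-1 : ℝ) ≤ m ∧ (m : ℝ) ≤ 1 := by
      intro x' hx'
      have hrefl : x' - ⟪coroot E x, x'⟫ • x ∈ D.Φ := D.reflect_mem x hxΦ x' hx'
      obtain ⟨m', hm', hm'1, hm'2⟩ := hprop _ hrefl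
      refine ⟨m', ?_, hm'1, hm'2⟩
      rw [← hm']
      have : l'.sum = v - coroot E x := by rw [hsum', hyx]; abel
      rw [this, inner_sub_left, inner_sub_right, real_inner_smul_right, hvx1]
      ring
    have h0 : l'.sum = 0 := ih l'.length hlen' l' rfl hmem' hprop'
    -- then v = coroot x, whence ⟪v, x⟫ = 2, contradicting ⟪v, x⟫ = 1
    have : v = coroot E x := by rw [hsum', h0, hyx, add_zero]
    rw [this, coroot_inner_self x hx0] at hvx1
    norm_num at hvx1

/-- Two points of the fundamental alcove differing by a coroot lattice
element coincide. -/
theorem alcove_points_congruent_mod_corootLattice (D : KPData E r)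
    (lam lam' : E) (hlam : lam ∈ D.alcove) (hlam' : lam' ∈ D.alcove)
    (h : lam - lam' ∈ D.corootLattice) : lam = lam' := by
  set v : E := lam - lam' with hvdef
  set S : Set E := coroot E '' (D.Φ : Set E) with hS
  -- the pairing of v with every root lies in [-1, 1] ∩ ℤ
  have hbound : ∀ x ∈ D.Φ, (-1 : ℝ) ≤ ⟪v, x⟫ ∧ ⟪v, x⟫ ≤ 1 := by
    intro x hx
    rcases D.pos_or_neg x hx with ⟨c, hc, hcx⟩ | ⟨c, hc, hcx⟩
    · have h1 : 0 ≤ ⟪lam, x⟫ := by rw [hcx]; exact D.pos_inner_nonneg hlam.1 c hc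
      have h2 : ⟪lam, x⟫ ≤ 1 := D.alcove_inner_le_one hlam hx
      have h3 : 0 ≤ ⟪lam', x⟫ := by rw [hcx]; exact D.pos_inner_nonneg hlam'.1 c hc
      have h4 : ⟪lam', x⟫ ≤ 1 := D.alcove_inner_le_one hlam' hx
      rw [hvdef, inner_sub_left]
      constructor <;> linarith
    · have hnx : -x ∈ D.Φ := D.neg_mem hx
      have hnxe : -x = ∑ i, c i • D.α i := by rw [hcx, neg_neg]
      have h1 : 0 ≤ ⟪lam, -x⟫ := by rw [hnxe]; exact D.pos_inner_nonneg hlam.1 c hc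
      have h2 : ⟪lam, -x⟫ ≤ 1 := D.alcove_inner_le_one hlam hnx
      have h3 : 0 ≤ ⟪lam', -x⟫ := by rw [hnxe]; exact D.pos_inner_nonneg hlam'.1 c hc
      have h4 : ⟪lam', -x⟫ ≤ 1 := D.alcove_inner_le_one hlam' hnx
      rw [inner_neg_right] at h1 h2 h3 h4
      rw [hvdef, inner_sub_left]
      constructor <;> linarith
  have hprop : ∀ x ∈ D.Φ, ∃ m : ℤ, ⟪v, x⟫ = (m : ℝ) ∧ (-1 : ℝ) ≤ m ∧ (m : ℝ) ≤ 1 := by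
    intro x hx
    obtain ⟨m, hm⟩ := D.lattice_inner_int h hx
    obtain ⟨h1, h2⟩ := hbound x hx
    exact ⟨m, hm, by rw [← hm]; exact h1, by rw [← hm]; exact h2⟩
  -- write v as a sum of a list of coroots
  have hS_neg : ∀ y ∈ -S, y ∈ S := by
    intro y hy
    rw [Set.mem_neg] at hy
    obtain ⟨z, hz, hzy⟩ := hy
    exact ⟨-z, D.neg_mem hz, by rw [coroot_neg, hzy, neg_neg]⟩
  have hmono : v ∈ AddSubmonoid.closure (S ∪ -S) := by
    rw [← AddSubgroup.closure_toAddSubmonoid]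
    exact h
  obtain ⟨l, hl, hlsum⟩ := AddSubmonoid.exists_list_of_mem_closure hmono
  have hlS : ∀ y ∈ l, y ∈ S := by
    intro y hy
    rcases hl y hy with h1 | h1
    · exact h1
    · exact hS_neg y h1
  have hv0 : v = 0 := by
    rw [← hlsum]
    exact D.descent l.length l rfl hlS (by rw [hlsum]; exact hprop)
  rw [hvdef] at hv0
  exact sub_eq_zero.mp hv0
end
end

section
/- Let F = {λ ∈ 𝒜₀ : ⟨λ, α₀ + α_j⟩ ≤ 1 for all j ∈ J} where J = {i : n_i = 1}. If λ, λ' ∈ F and λ − λ' belongs to the coweight lattice P^∨, then λ = λ'. -/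
open scoped RealInnerProductSpace Pointwise

noncomputable section

variable (E : Type) [NormedAddCommGroup E] [InnerProductSpace ℝ E] [FiniteDimensional ℝ E]

open KPData

variable {E} {r : ℕ}

/-- Two points of the Komrakov–Premet polytope differing by an element of
the coweight lattice coincide. -/
theorem KP_points_congruent_mod_coweightLattice (D : KPData E r)
    (lam lam' : E) (hlam : lam ∈ D.KP) (hlam' : lam' ∈ D.KP)
    (h : lam - lam' ∈ D.coweightLattice) : lam = lam' := by
  -- μ := lam - lam' pairs integrally with every simple root
  have hint : ∀ x ∈ D.coweightLattice, ∀ i, ∃ m : ℤ, ⟪x, D.α i⟫ = (m : ℝ) := by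
    intro x hx
    refine AddSubgroup.closure_induction ?_ ?_ ?_ ?_ hx
    · rintro y ⟨j, rfl⟩ i
      rw [D.ϖ_pair j i]
      by_cases hji : j = i
      · exact ⟨1, by simp [hji]⟩
      · exact ⟨0, by simp [hji]⟩
    · intro i; exact ⟨0, by simp⟩
    · intro a b _ _ ha hb i
      obtain ⟨m, hm⟩ := ha i; obtain ⟨m', hm'⟩ := hb i
      exact ⟨m + m', by rw [inner_add_left, hm, hm']; push_cast; ring⟩
    · intro a _ ha i
      obtain ⟨m, hm⟩ := ha i
      exact ⟨-m, by rw [inner_neg_left, hm]; push_cast; ring⟩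
  have hsum : ∀ l : E, ⟪l, D.α₀⟫ = ∑ j, (D.n j : ℝ) * ⟪l, D.α j⟫ := by
    intro l
    rw [D.α₀_eq, inner_sum]
    simp [real_inner_smul_right]
  have hge : ∀ l ∈ D.alcove, ∀ i, (D.n i : ℝ) * ⟪l, D.α i⟫ ≤ ⟪l, D.α₀⟫ := by
    intro l hl i
    rw [hsum l]
    exact Finset.single_le_sum
      (fun j _ => mul_nonneg (Nat.cast_nonneg _) (hl.1 j)) (Finset.mem_univ i)
  have hbd : ∀ l ∈ D.alcove, ∀ i, (D.n i : ℝ) * ⟪l, D.α i⟫ ≤ 1 :=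
    fun l hl i => (hge l hl i).trans hl.2
  have hzero : ∀ i, ⟪lam - lam', D.α i⟫ = 0 := by
    intro i
    obtain ⟨m, hm⟩ := hint _ h i
    rw [inner_sub_left] at hm
    have ha0 : 0 ≤ ⟪lam, D.α i⟫ := hlam.1.1 i
    have hb0 : 0 ≤ ⟪lam', D.α i⟫ := hlam'.1.1 i
    have ha1 : (D.n i : ℝ) * ⟪lam, D.α i⟫ ≤ 1 := hbd lam hlam.1 i
    have hb1 : (D.n i : ℝ) * ⟪lam', D.α i⟫ ≤ 1 := hbd lam' hlam'.1 i
    have hn1 : (1 : ℝ) ≤ (D.n i : ℝ) := by exact_mod_cast D.n_pos i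
    have hmz : m = 0 := by
      rcases eq_or_lt_of_le hn1 with hn | hn
      · -- n i = 1
        have hni : D.n i = 1 := by exact_mod_cast hn.symm
        have ha1' : ⟪lam, D.α i⟫ ≤ 1 := by rw [hni] at ha1; simpa using ha1
        have hb1' : ⟪lam', D.α i⟫ ≤ 1 := by rw [hni] at hb1; simpa using hb1
        have hml : (-1 : ℤ) ≤ m := by
          have : (-1 : ℝ) ≤ (m : ℝ) := by rw [← hm]; linarith
          exact_mod_cast this
        have hmu : m ≤ 1 := by
          have : (m : ℝ) ≤ 1 := by rw [← hm]; linarith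
          exact_mod_cast this
        interval_cases m
        · -- m = -1 : use KP condition for lam'
          exfalso
          push_cast at hm
          have hbge : (1 : ℝ) ≤ ⟪lam', D.α i⟫ := by linarith
          have h1 : (1 : ℝ) ≤ ⟪lam', D.α₀⟫ := by
            have := hge lam' hlam'.1 i
            rw [hni] at this; simp at this; linarith
          have h2 := hlam'.2 i hni
          rw [inner_add_right] at h2
          linarith
        · rfl
        · -- m = 1 : use KP condition for lam
          exfalso
          push_cast at hm
          have hage : (1 : ℝ) ≤ ⟪lam, D.α i⟫ := by linarith
          have h1 : (1 : ℝ) ≤ ⟪lam, D.α₀⟫ := by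
            have := hge lam hlam.1 i
            rw [hni] at this; simp at this; linarith
          have h2 := hlam.2 i hni
          rw [inner_add_right] at h2
          linarith
      · -- n i ≥ 2
        have hn2 : (2 : ℝ) ≤ (D.n i : ℝ) := by
          have h2n : 2 ≤ D.n i := by
            by_contra hc
            push_neg at hc
            have hni : D.n i = 1 := by have := D.n_pos i; omega
            rw [hni] at hn; norm_num at hn
          exact_mod_cast h2n
        have ha2 : ⟪lam, D.α i⟫ ≤ 1 / 2 := by nlinarith
        have hb2 : ⟪lam', D.α i⟫ ≤ 1 / 2 := by nlinarith
        have h1 : (m : ℝ) < 1 := by rw [← hm]; linarith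
        have h2 : (-1 : ℝ) < (m : ℝ) := by rw [← hm]; linarith
        have h1' : m < 1 := by exact_mod_cast h1
        have h2' : -1 < m := by exact_mod_cast h2
        omega
    rw [inner_sub_left, hm, hmz]
    simp
  have hspan : Submodule.span ℝ (Set.range D.α) = ⊤ := by
    rw [eq_top_iff, ← D.span_eq_top, Submodule.span_le]
    intro x hx
    rcases D.pos_or_neg x hx with ⟨c, _, rfl⟩ | ⟨c, _, rfl⟩
    · exact Submodule.sum_mem _ fun i _ =>
        Submodule.smul_mem _ _ (Submodule.subset_span ⟨i, rfl⟩)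
    · exact Submodule.neg_mem _ (Submodule.sum_mem _ fun i _ =>
        Submodule.smul_mem _ _ (Submodule.subset_span ⟨i, rfl⟩))
  have hall : ∀ y ∈ Submodule.span ℝ (Set.range D.α), ⟪lam - lam', y⟫ = 0 := by
    intro y hy
    refine Submodule.span_induction ?_ ?_ ?_ ?_ hy
    · rintro z ⟨i, rfl⟩; exact hzero i
    · simp
    · intro a b _ _ ha hb; rw [inner_add_right, ha, hb]; ring
    · intro c a _ ha; rw [real_inner_smul_right, ha]; ring
  have hmu : ⟪lam - lam', lam - lam'⟫ = 0 := by
    apply hall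
    rw [hspan]; trivial
  have := inner_self_eq_zero.mp hmu
  rwa [sub_eq_zero] at this
end
end

section
/- For i with n_i = 1, the element w_i = w_0^i w_0 is the unique element w of the finite Weyl group W of minimal length such that ϖ_i^∨ ∈ w w_0(𝒞₀), where 𝒞₀ is the closed fundamental Weyl chamber and w_0 the longest element of W. -/
open scoped RealInnerProductSpace Pointwise

noncomputable section

variable (E : Type) [NormedAddCommGroup E] [InnerProductSpace ℝ E] [FiniteDimensional ℝ E]

open KPData

variable {E} {r : ℕ}


set_option linter.unusedSectionVars false
namespace KPAux

variable (D : KPData E r)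

lemma refl_apply (x y : E) : refl x y = y - ⟪coroot E x, y⟫ • x := by
  have h : refl x y = Submodule.reflection (Submodule.span ℝ {x})ᗮ y := rfl
  rw [h, Submodule.reflection_orthogonal_apply, Submodule.reflection_singleton_apply, coroot,
    real_inner_smul_left, real_inner_self_eq_norm_sq]
  push_cast
  have hd : 2 / ‖x‖ ^ 2 * ⟪x, y⟫ = ⟪x, y⟫ / ‖x‖ ^ 2 + ⟪x, y⟫ / ‖x‖ ^ 2 := by ring
  rw [hd, add_smul]
  simp only [RCLike.ofReal_real_eq_id, id_eq]
  abel

lemma inner_coroot_left (x y : E) : ⟪coroot E x, y⟫ = 2 / ⟪x, x⟫ * ⟪x, y⟫ := by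
  rw [coroot, real_inner_smul_left]

lemma inner_coroot_self {x : E} (hx : x ≠ 0) : ⟪coroot E x, x⟫ = 2 := by
  rw [inner_coroot_left]
  have : ⟪x, x⟫ ≠ 0 := inner_self_ne_zero.mpr hx
  field_simp

lemma refl_apply_self {x : E} (hx : x ≠ 0) : refl x x = -x := by
  rw [refl_apply, inner_coroot_self hx, two_smul]; abel

lemma refl_refl (x : E) (y : E) : refl x (refl x y) = y := by
  have : ∀ z, refl x z = Submodule.reflection (Submodule.span ℝ {x})ᗮ z := fun _ => rfl
  rw [this, this, Submodule.reflection_reflection]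

lemma refl_symm (x : E) : (refl x).symm = refl x := rfl

lemma refl_mul_self (x : E) : refl x * refl x = 1 := by
  ext y; exact refl_refl x y

lemma refl_inv (x : E) : (refl x)⁻¹ = refl x :=
  inv_eq_of_mul_eq_one_right (refl_mul_self x)

lemma refl_inner (x : E) (a b : E) : ⟪refl x a, refl x b⟫ = ⟪a, b⟫ := by
  have : ∀ z, refl x z = Submodule.reflection (Submodule.span ℝ {x})ᗮ z := fun _ => rfl
  rw [this, this]
  exact (Submodule.reflection (Submodule.span ℝ {x})ᗮ).inner_map_map a b

lemma refl_lin (x : E) (c : ℝ) (a b : E) : refl x (c • a + b) = c • refl x a + refl x b := by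
  simp only [refl_apply, inner_add_right, real_inner_smul_right]
  module

end KPAux

/-- Bundle of properties of Weyl group elements. -/
structure IsW (D : KPData E r) (f : E ≃ᵃ[ℝ] E) : Prop where
  inner_map : ∀ a b : E, ⟪f a, f b⟫ = ⟪a, b⟫
  lin : ∀ (c : ℝ) (a b : E), f (c • a + b) = c • f a + f b
  root : ∀ x ∈ D.Φ, f x ∈ D.Φ
  root_symm : ∀ x ∈ D.Φ, f.symm x ∈ D.Φ

namespace IsW

variable {D : KPData E r} {f g : E ≃ᵃ[ℝ] E}

lemma map_zero (hf : IsW D f) : f 0 = 0 := by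
  have := hf.lin (-1) 0 0
  simpa using this

lemma map_smul (hf : IsW D f) (c : ℝ) (a : E) : f (c • a) = c • f a := by
  have := hf.lin c a 0
  simpa [hf.map_zero] using this

lemma map_add (hf : IsW D f) (a b : E) : f (a + b) = f a + f b := by
  have := hf.lin 1 a b
  simpa using this

lemma map_neg (hf : IsW D f) (a : E) : f (-a) = -f a := by
  have := hf.map_smul (-1) a
  simpa using this

lemma isLinearMap (hf : IsW D f) : IsLinearMap ℝ ⇑f :=
  ⟨hf.map_add, hf.map_smul⟩

lemma map_sum {n : ℕ} (hf : IsW D f) (c : Fin n → ℝ) (v : Fin n → E) :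
    f (∑ k, c k • v k) = ∑ k, c k • f (v k) := by
  rw [show f (∑ k, c k • v k) = (hf.isLinearMap.mk' f) (∑ k, c k • v k) from rfl,
    _root_.map_sum]
  simp only [IsLinearMap.mk'_apply, hf.map_smul]

lemma inner_symm_left (hf : IsW D f) (a b : E) : ⟪f.symm a, b⟫ = ⟪a, f b⟫ := by
  conv_lhs => rw [← hf.inner_map, AffineEquiv.apply_symm_apply]

lemma symm (hf : IsW D f) : IsW D f.symm := by
  refine ⟨fun a b => ?_, fun c a b => ?_, hf.root_symm, hf.root⟩
  · rw [← hf.inner_map (f.symm a) (f.symm b), AffineEquiv.apply_symm_apply,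
      AffineEquiv.apply_symm_apply]
  · apply f.injective
    rw [AffineEquiv.apply_symm_apply, hf.lin, AffineEquiv.apply_symm_apply,
      AffineEquiv.apply_symm_apply]

lemma mul (hf : IsW D f) (hg : IsW D g) : IsW D (f * g) := by
  refine ⟨fun a b => ?_, fun c a b => ?_, fun x hx => ?_, fun x hx => ?_⟩
  · show ⟪f (g a), f (g b)⟫ = _
    rw [hf.inner_map, hg.inner_map]
  · show f (g _) = c • f (g a) + f (g b)
    rw [hg.lin, hf.lin]
  · exact hf.root _ (hg.root x hx)
  · exact hg.root_symm _ (hf.root_symm x hx)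

lemma one : IsW D 1 := ⟨fun _ _ => rfl, fun _ _ _ => rfl, fun x hx => hx, fun x hx => hx⟩

lemma inv (hf : IsW D f) : IsW D f⁻¹ := hf.symm

end IsW

variable {D : KPData E r}

lemma isW_refl {x : E} (hx : x ∈ D.Φ) : IsW D (refl x) := by
  refine ⟨KPAux.refl_inner x, KPAux.refl_lin x, fun y hy => ?_, fun y hy => ?_⟩
  · rw [KPAux.refl_apply]; exact D.reflect_mem x hx y hy
  · rw [KPAux.refl_symm, KPAux.refl_apply]; exact D.reflect_mem x hx y hy

lemma isW_of_mem_closure {T : Set E} (hT : T ⊆ (D.Φ : Set E)) {f : E ≃ᵃ[ℝ] E}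
    (hf : f ∈ Subgroup.closure {f | ∃ x ∈ T, f = refl x}) : IsW D f := by
  induction hf using Subgroup.closure_induction with
  | mem x hx => obtain ⟨y, hy, rfl⟩ := hx; exact isW_refl (hT hy)
  | one => exact IsW.one
  | mul x y _ _ hx hy => exact hx.mul hy
  | inv x _ hx => exact hx.inv

lemma isW_of_mem_weylGroup {f : E ≃ᵃ[ℝ] E} (hf : f ∈ D.weylGroup) : IsW D f := by
  refine isW_of_mem_closure (le_refl _) ?_
  exact hf

lemma refl_mem_weylGroup {x : E} (hx : x ∈ D.Φ) : refl x ∈ D.weylGroup :=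
  Subgroup.subset_closure ⟨x, hx, rfl⟩

section Coeffs

variable (D : KPData E r)

lemma pair_sum (c : Fin r → ℝ) (j : Fin r) : ⟪D.ϖ j, ∑ k, c k • D.α k⟫ = c j := by
  rw [inner_sum]
  simp only [real_inner_smul_right, D.ϖ_pair]
  simp

lemma span_alpha : Submodule.span ℝ (Set.range D.α) = ⊤ := by
  rw [eq_top_iff, ← D.span_eq_top, Submodule.span_le]
  intro x hx
  rcases D.pos_or_neg x hx with ⟨c, _, rfl⟩ | ⟨c, _, rfl⟩
  · exact Submodule.sum_mem _ fun k _ =>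
      Submodule.smul_mem _ _ (Submodule.subset_span ⟨k, rfl⟩)
  · exact Submodule.neg_mem _ <| Submodule.sum_mem _ fun k _ =>
      Submodule.smul_mem _ _ (Submodule.subset_span ⟨k, rfl⟩)

lemma eq_sum (x : E) : x = ∑ k, ⟪D.ϖ k, x⟫ • D.α k := by
  have hx : x ∈ Submodule.span ℝ (Set.range D.α) := by rw [span_alpha]; trivial
  obtain ⟨c, hc⟩ := (Submodule.mem_span_range_iff_exists_fun ℝ).mp hx
  have : ∀ j, c j = ⟪D.ϖ j, x⟫ := fun j => by rw [← hc, pair_sum]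
  conv_lhs => rw [← hc]
  exact Finset.sum_congr rfl fun k _ => by rw [← this k]

variable {D}

lemma pos_iff {x : E} : x ∈ D.posRoots ↔ x ∈ D.Φ ∧ ∀ k, 0 ≤ ⟪D.ϖ k, x⟫ := by
  constructor
  · rintro ⟨hx, c, hc, rfl⟩
    exact ⟨hx, fun k => by rw [pair_sum]; exact hc k⟩
  · rintro ⟨hx, h⟩
    exact ⟨hx, fun k => ⟪D.ϖ k, x⟫, h, eq_sum D x⟩

lemma pos_mem_Φ {x : E} (hx : x ∈ D.posRoots) : x ∈ D.Φ := (pos_iff.mp hx).1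

lemma pos_coeff {x : E} (hx : x ∈ D.posRoots) (k : Fin r) : 0 ≤ ⟪D.ϖ k, x⟫ :=
  (pos_iff.mp hx).2 k

lemma ne_zero_of_mem {x : E} (hx : x ∈ D.Φ) : x ≠ 0 := D.root_ne_zero x hx

lemma neg_mem_Φ {x : E} (hx : x ∈ D.Φ) : -x ∈ D.Φ := by
  have h := D.reflect_mem x hx x hx
  rwa [KPAux.inner_coroot_self (ne_zero_of_mem hx), two_smul,
    show x - (x + x) = -x by abel] at h

lemma pos_or_neg_root {x : E} (hx : x ∈ D.Φ) : x ∈ D.posRoots ∨ -x ∈ D.posRoots := by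
  rcases D.pos_or_neg x hx with ⟨c, hc, hx'⟩ | ⟨c, hc, hx'⟩
  · exact Or.inl ⟨hx, c, hc, hx'⟩
  · exact Or.inr ⟨neg_mem_Φ hx, c, hc, by rw [hx', neg_neg]⟩

lemma not_pos_and_neg {x : E} (hx : x ∈ D.posRoots) (hx' : -x ∈ D.posRoots) : False := by
  have hz : x = 0 := by
    rw [eq_sum D x]
    refine Finset.sum_eq_zero fun k _ => ?_
    have h1 := pos_coeff hx k
    have h2 := pos_coeff hx' k
    rw [inner_neg_right] at h2
    have : ⟪D.ϖ k, x⟫ = 0 := le_antisymm (by linarith) h1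
    rw [this, zero_smul]
  exact ne_zero_of_mem (pos_mem_Φ hx) hz

lemma pos_of_coeff_pos {x : E} (hx : x ∈ D.Φ) {k : Fin r} (h : 0 < ⟪D.ϖ k, x⟫) :
    x ∈ D.posRoots := by
  rcases pos_or_neg_root hx with h' | h'
  · exact h'
  · have := pos_coeff h' k
    rw [inner_neg_right] at this
    linarith

lemma neg_pos_of_coeff_neg {x : E} (hx : x ∈ D.Φ) {k : Fin r} (h : ⟪D.ϖ k, x⟫ < 0) :
    -x ∈ D.posRoots := by
  rcases pos_or_neg_root hx with h' | h'
  · have := pos_coeff h' k; linarith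
  · exact h'

lemma alpha_pos (j : Fin r) : D.α j ∈ D.posRoots := by
  refine pos_of_coeff_pos (D.α_mem j) (k := j) ?_
  rw [D.ϖ_pair]; simp

lemma posRoots_finite : D.posRoots.Finite :=
  Set.Finite.subset D.Φ.finite_toSet fun x hx => pos_mem_Φ hx

/-- positive roots are nonzero -/
lemma pos_ne_zero {x : E} (hx : x ∈ D.posRoots) : x ≠ 0 := ne_zero_of_mem (pos_mem_Φ hx)

lemma mem_neg_image {P : Set E} {y : E} : y ∈ Neg.neg '' P ↔ -y ∈ P := by
  constructor
  · rintro ⟨p, hp, rfl⟩; rwa [neg_neg]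
  · intro h; exact ⟨-y, h, by rw [neg_neg]⟩

end Coeffs

section TwoRho

variable {D : KPData E r}

lemma exists_coeff_pos_ne {β : E} (hβ : β ∈ D.posRoots) {j : Fin r} (hne : β ≠ D.α j) :
    ∃ k, k ≠ j ∧ 0 < ⟪D.ϖ k, β⟫ := by
  by_contra h
  push_neg at h
  have hz : ∀ k, k ≠ j → ⟪D.ϖ k, β⟫ = 0 := fun k hk =>
    le_antisymm (h k hk) (pos_coeff hβ k)
  have hβj : β = ⟪D.ϖ j, β⟫ • D.α j := by
    conv_lhs => rw [eq_sum D β]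
    rw [Finset.sum_eq_single j]
    · intro k _ hk; rw [hz k hk, zero_smul]
    · intro hj; exact absurd (Finset.mem_univ j) hj
  rcases D.reduced (D.α j) (D.α_mem j) ⟪D.ϖ j, β⟫ (by rw [← hβj]; exact pos_mem_Φ hβ) with
    h1 | h1
  · exact hne (by rw [hβj, h1, one_smul])
  · have := pos_coeff hβ j; rw [h1] at this; linarith

lemma simple_reflect_pos {β : E} (hβ : β ∈ D.posRoots) {j : Fin r} (hne : β ≠ D.α j) :
    refl (D.α j) β ∈ D.posRoots := by
  obtain ⟨k, hk, hpos⟩ := exists_coeff_pos_ne hβ hne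
  rw [KPAux.refl_apply]
  refine pos_of_coeff_pos (D.reflect_mem _ (D.α_mem j) β (pos_mem_Φ hβ)) (k := k) ?_
  rw [inner_sub_right, real_inner_smul_right, D.ϖ_pair, if_neg hk, mul_zero, sub_zero]
  exact hpos

lemma refl_alpha_self (j : Fin r) : refl (D.α j) (D.α j) = -(D.α j) :=
  KPAux.refl_apply_self (ne_zero_of_mem (D.α_mem j))

/-- the sum of all positive roots -/
def twoRho (D : KPData E r) : E := ∑ x ∈ (posRoots_finite (D := D)).toFinset, x

lemma refl_twoRho (j : Fin r) : refl (D.α j) (twoRho D) = twoRho D - (2 : ℝ) • D.α j := by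
  classical
  set Pf := (posRoots_finite (D := D)).toFinset with hPf
  have hαj : D.α j ∈ Pf := by rw [hPf, Set.Finite.mem_toFinset]; exact alpha_pos j
  have hf : IsW D (refl (D.α j)) := isW_refl (D.α_mem j)
  have hmap : refl (D.α j) (∑ x ∈ Pf, x) = ∑ x ∈ Pf, refl (D.α j) x := by
    rw [show (refl (D.α j)) (∑ x ∈ Pf, x) = (hf.isLinearMap.mk' _) (∑ x ∈ Pf, x) from rfl,
      _root_.map_sum]
    rfl
  have herase : ∀ x ∈ Pf.erase (D.α j), refl (D.α j) x ∈ Pf.erase (D.α j) := by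
    intro x hx
    obtain ⟨hne, hxP⟩ := Finset.mem_erase.mp hx
    rw [hPf, Set.Finite.mem_toFinset] at hxP
    have h1 : refl (D.α j) x ∈ D.posRoots := simple_reflect_pos hxP hne
    refine Finset.mem_erase.mpr ⟨fun hc => ?_, by rw [hPf, Set.Finite.mem_toFinset]; exact h1⟩
    have hx2 : x = -(D.α j) := by
      rw [← KPAux.refl_refl (D.α j) x, hc, refl_alpha_self]
    exact not_pos_and_neg (alpha_pos j) (by rw [← hx2]; exact hxP)
  have hsum : ∑ x ∈ Pf.erase (D.α j), refl (D.α j) x = ∑ x ∈ Pf.erase (D.α j), x :=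
    Finset.sum_nbij' (fun x => refl (D.α j) x) (fun x => refl (D.α j) x)
      herase herase (fun x _ => KPAux.refl_refl _ x) (fun x _ => KPAux.refl_refl _ x)
      (fun x _ => rfl)
  calc refl (D.α j) (twoRho D)
      = refl (D.α j) (D.α j) + ∑ x ∈ Pf.erase (D.α j), refl (D.α j) x := by
        rw [twoRho, hmap, ← Finset.add_sum_erase _ _ hαj]
    _ = twoRho D - (2 : ℝ) • D.α j := by
        rw [hsum, refl_alpha_self, twoRho, ← Finset.add_sum_erase _ _ hαj]
        rw [two_smul]
        abel

end TwoRho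

section TwoRho2

variable {D : KPData E r}

lemma inner_alpha_twoRho (j : Fin r) : ⟪D.α j, twoRho D⟫ = ⟪D.α j, D.α j⟫ := by
  have h1 := refl_twoRho (D := D) j
  rw [KPAux.refl_apply] at h1
  have h3 : ⟪coroot E (D.α j), twoRho D⟫ • D.α j = (2 : ℝ) • D.α j := sub_right_inj.mp h1
  have h4 : (⟪coroot E (D.α j), twoRho D⟫ - 2) • D.α j = 0 := by rw [sub_smul, h3, sub_self]
  have hα := ne_zero_of_mem (D.α_mem j)
  rcases smul_eq_zero.mp h4 with h | h
  · have hc : ⟪coroot E (D.α j), twoRho D⟫ = 2 := by linarith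
    rw [KPAux.inner_coroot_left] at hc
    have hin : ⟪D.α j, D.α j⟫ ≠ 0 := inner_self_ne_zero.mpr hα
    field_simp at hc
    linarith
  · exact absurd h hα

lemma inner_pos_twoRho {β : E} (hβ : β ∈ D.posRoots) : 0 < ⟪β, twoRho D⟫ := by
  have hexp : ⟪β, twoRho D⟫ = ∑ k, ⟪D.ϖ k, β⟫ * ⟪D.α k, D.α k⟫ := by
    conv_lhs => rw [eq_sum D β]
    rw [sum_inner]
    exact Finset.sum_congr rfl fun k _ => by
      rw [real_inner_smul_left, inner_alpha_twoRho]
  rw [hexp]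
  have hterm : ∀ k ∈ Finset.univ, 0 ≤ ⟪D.ϖ k, β⟫ * ⟪D.α k, D.α k⟫ := fun k _ =>
    mul_nonneg (pos_coeff hβ k) real_inner_self_nonneg
  refine Finset.sum_pos' hterm ?_
  by_contra h
  push_neg at h
  have hz : ∀ k, ⟪D.ϖ k, β⟫ = 0 := by
    intro k
    have := h k (Finset.mem_univ k)
    have h2 := hterm k (Finset.mem_univ k)
    have heq : ⟪D.ϖ k, β⟫ * ⟪D.α k, D.α k⟫ = 0 := le_antisymm this h2
    rcases mul_eq_zero.mp heq with h3 | h3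
    · exact h3
    · exact absurd h3 (inner_self_ne_zero.mpr (ne_zero_of_mem (D.α_mem k)))
  refine absurd ?_ (pos_ne_zero hβ)
  rw [eq_sum D β]
  exact Finset.sum_eq_zero fun k _ => by rw [hz k, zero_smul]

lemma coroot_twoRho_int {x : E} (hx : x ∈ D.Φ) : ∃ m : ℤ, ⟪coroot E x, twoRho D⟫ = m := by
  have hmem : ⟪coroot E x, twoRho D⟫ ∈ (Int.castAddHom ℝ).range := by
    rw [twoRho, inner_sum]
    refine AddSubgroup.sum_mem _ fun γ hγ => ?_
    rw [Set.Finite.mem_toFinset] at hγ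
    obtain ⟨m, hm⟩ := D.integrality x hx γ (pos_mem_Φ hγ)
    exact ⟨m, hm.symm⟩
  obtain ⟨m, hm⟩ := hmem
  exact ⟨m, hm.symm⟩

lemma coroot_map {g : E ≃ᵃ[ℝ] E} (hg : IsW D g) (x : E) : coroot E (g x) = g (coroot E x) := by
  rw [coroot, coroot, hg.map_smul, hg.inner_map]

lemma refl_self_adjoint (x a b : E) : ⟪refl x a, b⟫ = ⟪a, refl x b⟫ := by
  conv_lhs => rw [← KPAux.refl_refl x b]
  rw [KPAux.refl_inner]

/-- conjugation formula -/
lemma conj_refl {g : E ≃ᵃ[ℝ] E} (hg : IsW D g) (x : E) :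
    g * refl x * g⁻¹ = refl (g x) := by
  have hsub : ∀ (c : ℝ) (a b : E), g (a - c • b) = g a - c • g b := by
    intro c a b
    have h := hg.lin (-c) b a
    have e1 : a - c • b = (-c) • b + a := by rw [neg_smul, neg_add_eq_sub]
    rw [e1, h, neg_smul, neg_add_eq_sub]
  ext y
  show g (refl x (g.symm y)) = refl (g x) y
  rw [KPAux.refl_apply, KPAux.refl_apply, hsub, AffineEquiv.apply_symm_apply]
  congr 2
  rw [coroot_map hg]
  have h5 := hg.symm.inner_symm_left (coroot E x) y
  exact h5.symm

lemma refl_neg (x : E) : refl (-x) = refl x := by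
  ext y
  rw [KPAux.refl_apply, KPAux.refl_apply, coroot, coroot]
  rw [inner_neg_neg, real_inner_smul_left, real_inner_smul_left, inner_neg_left,
    mul_neg, neg_smul, smul_neg, neg_neg]

end TwoRho2

section Words

variable {D : KPData E r}

lemma inner_self_pos' {x : E} (hx : x ≠ 0) : 0 < ⟪x, x⟫ :=
  lt_of_le_of_ne real_inner_self_nonneg (Ne.symm (inner_self_ne_zero.mpr hx))

/-- the subgroup generated by simple reflections -/
def Ws (D : KPData E r) : Subgroup (E ≃ᵃ[ℝ] E) :=
  Subgroup.closure {f | ∃ j : Fin r, f = refl (D.α j)}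

lemma refl_mem_Ws_aux : ∀ N : ℕ, ∀ x ∈ D.posRoots, ⟪coroot E x, twoRho D⟫ ≤ N →
    refl x ∈ Ws D := by
  intro N
  induction N with
  | zero =>
    intro x hx h
    exfalso
    have hxx : 0 < ⟪x, x⟫ := inner_self_pos' (pos_ne_zero hx)
    have h2 : 0 < ⟪coroot E x, twoRho D⟫ := by
      rw [KPAux.inner_coroot_left]
      exact mul_pos (div_pos two_pos hxx) (inner_pos_twoRho hx)
    simp only [Nat.cast_zero] at h
    linarith
  | succ N ih =>
    intro x hx hN
    by_cases hsimp : ∃ j, x = D.α j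
    · obtain ⟨j, rfl⟩ := hsimp
      exact Subgroup.subset_closure ⟨j, rfl⟩
    · push_neg at hsimp
      have hxx : 0 < ⟪x, x⟫ := inner_self_pos' (pos_ne_zero hx)
      have hsum : ⟪x, x⟫ = ∑ k, ⟪D.ϖ k, x⟫ * ⟪D.α k, x⟫ := by
        conv_lhs => rw [eq_sum D x]
        rw [sum_inner]
        exact Finset.sum_congr rfl fun k _ => by
          rw [real_inner_smul_left, ← eq_sum D x]
      have hex : ∃ k, 0 < ⟪D.ϖ k, x⟫ * ⟪D.α k, x⟫ := by
        by_contra hc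
        push_neg at hc
        have : ⟪x, x⟫ ≤ 0 := hsum ▸ Finset.sum_nonpos fun k _ => hc k
        linarith
      obtain ⟨k, hk⟩ := hex
      have hαx : 0 < ⟪D.α k, x⟫ := by
        rcases (mul_pos_iff.mp hk) with ⟨_, h⟩ | ⟨h, _⟩
        · exact h
        · exact absurd (pos_coeff hx k) (not_le.mpr h)
      set x' := refl (D.α k) x with hx'def
      have hx' : x' ∈ D.posRoots := simple_reflect_pos hx (hsimp k)
      have hint : 1 ≤ ⟪coroot E x, D.α k⟫ := by
        obtain ⟨m, hm⟩ := D.integrality x (pos_mem_Φ hx) (D.α k) (D.α_mem k)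
        have hpos : 0 < ⟪coroot E x, D.α k⟫ := by
          rw [KPAux.inner_coroot_left]
          exact mul_pos (div_pos two_pos hxx) (by rwa [real_inner_comm])
        rw [hm] at hpos ⊢
        have hm0 : (0 : ℤ) < m := by exact_mod_cast hpos
        have hm1 : (1 : ℤ) ≤ m := hm0
        exact_mod_cast hm1
      have hme : ⟪coroot E x', twoRho D⟫ =
          ⟪coroot E x, twoRho D⟫ - 2 * ⟪coroot E x, D.α k⟫ := by
        rw [hx'def, coroot_map (isW_refl (D.α_mem k)), refl_self_adjoint, refl_twoRho,
          inner_sub_right, real_inner_smul_right]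
        try ring
      have hle : ⟪coroot E x', twoRho D⟫ ≤ N := by
        rw [hme]
        push_cast at hN ⊢
        linarith
      have hWs := ih x' hx' hle
      have hconj := conj_refl (isW_refl (D.α_mem k)) x'
      have hrefl : refl (D.α k) x' = x := KPAux.refl_refl _ x
      rw [hrefl, KPAux.refl_inv] at hconj
      rw [← hconj]
      exact mul_mem (mul_mem (Subgroup.subset_closure ⟨k, rfl⟩) hWs)
        (Subgroup.subset_closure ⟨k, rfl⟩)

lemma refl_mem_Ws {x : E} (hx : x ∈ D.Φ) : refl x ∈ Ws D := by
  have key : ∀ y ∈ D.posRoots, refl y ∈ Ws D := by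
    intro y hy
    obtain ⟨m, hm⟩ := coroot_twoRho_int (pos_mem_Φ hy)
    refine refl_mem_Ws_aux m.toNat y hy ?_
    rw [hm]
    exact_mod_cast Int.self_le_toNat m
  rcases pos_or_neg_root hx with h | h
  · exact key x h
  · rw [← refl_neg]
    exact key (-x) h

lemma weyl_le_Ws : D.weylGroup ≤ Ws D := by
  rw [KPData.weylGroup, Subgroup.closure_le]
  rintro f ⟨x, hx, rfl⟩
  exact refl_mem_Ws hx

/-- product of a word of simple reflections -/
def wordProd (D : KPData E r) (L : List (Fin r)) : E ≃ᵃ[ℝ] E :=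
  (L.map fun j => refl (D.α j)).prod

lemma wordProd_nil : wordProd D [] = 1 := rfl

lemma wordProd_cons (j : Fin r) (L : List (Fin r)) :
    wordProd D (j :: L) = refl (D.α j) * wordProd D L := by
  simp [wordProd]

lemma wordProd_append (L₁ L₂ : List (Fin r)) :
    wordProd D (L₁ ++ L₂) = wordProd D L₁ * wordProd D L₂ := by
  simp [wordProd]

lemma wordProd_singleton (j : Fin r) : wordProd D [j] = refl (D.α j) := by
  simp [wordProd]

lemma wordProd_mem_weyl (L : List (Fin r)) : wordProd D L ∈ D.weylGroup := by
  induction L with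
  | nil => exact one_mem _
  | cons k L ih => rw [wordProd_cons]; exact mul_mem (refl_mem_weylGroup (D.α_mem k)) ih

lemma wordProd_inv (L : List (Fin r)) : (wordProd D L)⁻¹ = wordProd D L.reverse := by
  induction L with
  | nil => simp [wordProd_nil]
  | cons k L ih =>
    rw [wordProd_cons, mul_inv_rev, ih, List.reverse_cons, wordProd_append,
      wordProd_singleton, KPAux.refl_inv]

lemma exists_word {v : E ≃ᵃ[ℝ] E} (hv : v ∈ Ws D) : ∃ L : List (Fin r), v = wordProd D L := by
  induction hv using Subgroup.closure_induction with
  | mem x hx => obtain ⟨j, rfl⟩ := hx; exact ⟨[j], (wordProd_singleton j).symm⟩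
  | one => exact ⟨[], rfl⟩
  | mul x y _ _ hx hy =>
    obtain ⟨L₁, rfl⟩ := hx
    obtain ⟨L₂, rfl⟩ := hy
    exact ⟨L₁ ++ L₂, (wordProd_append L₁ L₂).symm⟩
  | inv x _ hx =>
    obtain ⟨L, rfl⟩ := hx
    exact ⟨L.reverse, wordProd_inv L⟩

lemma deletion : ∀ (K : List (Fin r)) (j : Fin r), -((wordProd D K) (D.α j)) ∈ D.posRoots →
    ∃ K' : List (Fin r), K'.length + 1 = K.length ∧
      wordProd D K' = wordProd D K * refl (D.α j) := by
  intro K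
  induction K with
  | nil =>
    intro j h
    exact absurd h (fun hc => not_pos_and_neg (alpha_pos j) hc)
  | cons k K ih =>
    intro j h
    set q := wordProd D K with hq
    by_cases hqn : -(q (D.α j)) ∈ D.posRoots
    · obtain ⟨K'', hlen, hprod⟩ := ih j hqn
      refine ⟨k :: K'', by simp [List.length_cons, hlen], ?_⟩
      rw [wordProd_cons, hprod, wordProd_cons, mul_assoc]
    · have hqw : IsW D q := isW_of_mem_weylGroup (wordProd_mem_weyl K)
      have hqmem : q (D.α j) ∈ D.Φ := hqw.root _ (D.α_mem j)
      have hqpos : q (D.α j) ∈ D.posRoots := by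
        rcases pos_or_neg_root hqmem with h' | h'
        · exact h'
        · exact absurd h' hqn
      have heq : q (D.α j) = D.α k := by
        by_contra hne
        have hp := simple_reflect_pos hqpos (hne)
        have hh : -(refl (D.α k) (q (D.α j))) ∈ D.posRoots := by
          have : (wordProd D (k :: K)) (D.α j) = refl (D.α k) (q (D.α j)) := by
            rw [wordProd_cons]; rfl
          rwa [this] at h
        exact not_pos_and_neg hp hh
      have hconj := conj_refl hqw (D.α j)
      rw [heq] at hconj
      refine ⟨K, rfl, ?_⟩
      have hgrp : q * refl (D.α j) * q⁻¹ * q * refl (D.α j) =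
          q * (refl (D.α j) * refl (D.α j)) := by group
      rw [wordProd_cons, ← hq, ← hconj, hgrp, KPAux.refl_mul_self, mul_one]

lemma pos_preserving_eq_one {v : E ≃ᵃ[ℝ] E} (hv : v ∈ D.weylGroup)
    (hpos : ∀ β ∈ D.posRoots, v β ∈ D.posRoots) : v = 1 := by
  obtain ⟨L, rfl⟩ := exists_word (weyl_le_Ws hv)
  clear hv
  suffices h : ∀ (n : ℕ) (L : List (Fin r)), L.length ≤ n →
      (∀ β ∈ D.posRoots, wordProd D L β ∈ D.posRoots) → wordProd D L = 1 from
    h L.length L le_rfl hpos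
  clear hpos L
  intro n
  induction n with
  | zero =>
    intro L hL _
    rw [List.length_eq_zero_iff.mp (Nat.le_zero.mp hL)]
    rfl
  | succ n ih =>
    intro L hL hp
    rcases List.eq_nil_or_concat L with rfl | ⟨L₁, j, rfl⟩
    · rfl
    · simp only [List.concat_eq_append] at hL hp ⊢
      have hlin : IsW D (wordProd D L₁) := isW_of_mem_weylGroup (wordProd_mem_weyl L₁)
      have hneg : -((wordProd D L₁) (D.α j)) ∈ D.posRoots := by
        have h1 := hp (D.α j) (alpha_pos j)
        have h2 : (wordProd D (L₁ ++ [j])) (D.α j) = -((wordProd D L₁) (D.α j)) := by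
          rw [wordProd_append, wordProd_singleton]
          show (wordProd D L₁) (refl (D.α j) (D.α j)) = _
          rw [refl_alpha_self, hlin.map_neg]
        rwa [h2] at h1
      obtain ⟨K', hlen, hprod⟩ := deletion L₁ j hneg
      have hKeq : wordProd D (L₁ ++ [j]) = wordProd D K' := by
        rw [hprod, wordProd_append, wordProd_singleton]
      rw [hKeq] at hp ⊢
      have hlen2 : K'.length ≤ n := by
        have h3 : (L₁ ++ [j]).length ≤ n + 1 := hL
        rw [List.length_append] at h3
        simp at h3
        omega
      exact ih K' hlen2 hp

end Words

section Main

variable {D : KPData E r} {i : Fin r}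

/-- the standard parabolic subspace -/
abbrev Msub (D : KPData E r) (i : Fin r) : Submodule ℝ E :=
  Submodule.span ℝ (D.α '' {j | j ≠ i})

lemma mem_M_iff {x : E} : x ∈ Msub D i ↔ ⟪D.ϖ i, x⟫ = 0 := by
  constructor
  · intro hx
    have hle : Msub D i ≤ (Submodule.span ℝ {D.ϖ i})ᗮ := by
      rw [Submodule.span_le]
      rintro _ ⟨j, hj, rfl⟩
      rw [SetLike.mem_coe, Submodule.mem_orthogonal_singleton_iff_inner_right, D.ϖ_pair,
        if_neg (fun hc => hj hc.symm)]
    exact Submodule.mem_orthogonal_singleton_iff_inner_right.mp (hle hx)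
  · intro hx
    have := eq_sum D x
    rw [this]
    refine Submodule.sum_mem _ fun k _ => ?_
    by_cases hk : k = i
    · rw [hk, hx, zero_smul]; exact Submodule.zero_mem _
    · exact Submodule.smul_mem _ _ (Submodule.subset_span ⟨k, hk, rfl⟩)

/-- the set of positive roots with nonzero i-th coefficient -/
def Sset (D : KPData E r) (i : Fin r) : Set E :=
  {γ | γ ∈ D.posRoots ∧ ⟪D.ϖ i, γ⟫ ≠ 0}

lemma Sset_finite : (Sset D i).Finite :=
  Set.Finite.subset D.Φ.finite_toSet fun x hx => pos_mem_Φ hx.1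

section W0

variable {w₀ : E ≃ᵃ[ℝ] E} (hw₀ : IsW D w₀)
  (hw₀long : ∀ x ∈ D.posRoots, -(w₀ x) ∈ D.posRoots)

include hw₀ hw₀long in
lemma w0_surj : ∀ γ ∈ D.posRoots, ∃ β ∈ D.posRoots, -(w₀ β) = γ := by
  have hmap : Set.MapsTo (fun β => -(w₀ β)) D.posRoots D.posRoots := fun β hβ => hw₀long β hβ
  have hinj : Set.InjOn (fun β => -(w₀ β)) D.posRoots := fun a _ b _ hab =>
    w₀.injective (neg_injective hab)
  have hbij := (Set.Finite.injOn_iff_bijOn_of_mapsTo posRoots_finite hmap).mp hinj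
  intro γ hγ
  obtain ⟨β, hβ, hβγ⟩ := hbij.surjOn hγ
  exact ⟨β, hβ, hβγ⟩

end W0

section W0P

variable {w0p : E ≃ᵃ[ℝ] E}
  (hw0p : w0p ∈ Subgroup.closure
    {f | ∃ x ∈ (D.Φ : Set E) ∩ (Msub D i : Set E), f = refl x})

include hw0p in
lemma isW_w0p : IsW D w0p :=
  isW_of_mem_closure (fun x hx => hx.1) hw0p

include hw0p in
lemma w0p_diff_M : ∀ y : E, w0p y - y ∈ Msub D i := by
  induction hw0p using Subgroup.closure_induction with
  | mem f hf =>
    obtain ⟨x, ⟨_, hxM⟩, rfl⟩ := hf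
    intro y
    rw [KPAux.refl_apply, sub_sub_cancel_left]
    exact Submodule.neg_mem _ (Submodule.smul_mem _ _ hxM)
  | one => intro y; simp
  | mul f g _ _ hf hg =>
    intro y
    have : (f * g) y - y = (f (g y) - g y) + (g y - y) := by
      show f (g y) - y = _; abel
    rw [this]
    exact Submodule.add_mem _ (hf (g y)) (hg y)
  | inv f _ hf =>
    intro y
    have : f⁻¹ y - y = -(f (f.symm y) - f.symm y) := by
      show f.symm y - y = _
      rw [AffineEquiv.apply_symm_apply]
      abel
    rw [this]
    exact Submodule.neg_mem _ (hf (f.symm y))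

include hw0p in
lemma w0p_coeff : ∀ y : E, ⟪D.ϖ i, w0p y⟫ = ⟪D.ϖ i, y⟫ := by
  intro y
  have h1 : w0p y = y + (w0p y - y) := by abel
  rw [h1, inner_add_right, mem_M_iff.mp (w0p_diff_M hw0p y), add_zero]

end W0P

end Main

section Main2

variable {D : KPData E r} {i : Fin r}

lemma mem_image_chamber {u : E ≃ᵃ[ℝ] E} (hu : IsW D u) :
    D.ϖ i ∈ ⇑u '' D.chamber ↔ ∀ j, 0 ≤ ⟪D.ϖ i, u (D.α j)⟫ := by
  constructor
  · rintro ⟨l, hl, hul⟩ j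
    rw [← hul, hu.inner_map]
    exact hl j
  · intro h
    refine ⟨u.symm (D.ϖ i), fun j => ?_, AffineEquiv.apply_symm_apply u _⟩
    rw [hu.inner_symm_left]
    exact h j

variable {w₀ w0p : E ≃ᵃ[ℝ] E}
  (hw₀ : IsW D w₀)
  (hw₀long : ∀ x ∈ D.posRoots, -(w₀ x) ∈ D.posRoots)
  (hw0p : w0p ∈ Subgroup.closure
    {f | ∃ x ∈ (D.Φ : Set E) ∩ (Msub D i : Set E), f = refl x})
  (hw0plong : ∀ x ∈ D.posRoots ∩ (Msub D i : Set E), -(w0p x) ∈ D.posRoots)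

include hw₀ hw₀long in
lemma C_of_cond {w : E ≃ᵃ[ℝ] E} (hw : IsW D w)
    (hwc : ∀ j, 0 ≤ ⟪D.ϖ i, w (w₀ (D.α j))⟫) :
    ∀ γ ∈ D.posRoots, ⟪D.ϖ i, w γ⟫ ≤ 0 := by
  have hu : IsW D (w * w₀) := hw.mul hw₀
  have hβ : ∀ β ∈ D.posRoots, 0 ≤ ⟪D.ϖ i, w (w₀ β)⟫ := by
    intro β hβP
    have hexp : w (w₀ β) = ∑ k, ⟪D.ϖ k, β⟫ • (w * w₀) (D.α k) := by
      show (w * w₀) β = _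
      conv_lhs => rw [eq_sum D β]
      exact hu.map_sum _ _
    rw [hexp, inner_sum]
    refine Finset.sum_nonneg fun k _ => ?_
    rw [real_inner_smul_right]
    exact mul_nonneg (pos_coeff hβP k) (hwc k)
  intro γ hγ
  obtain ⟨β, hβP, rfl⟩ := w0_surj hw₀ hw₀long γ hγ
  rw [hw.map_neg, inner_neg_right]
  linarith [hβ β hβP]

include hw₀ hw₀long hw0p in
lemma cond_wi : ∀ j, 0 ≤ ⟪D.ϖ i, (w0p * w₀ * w₀) (D.α j)⟫ := by
  intro j
  have h1 : -(w₀ (D.α j)) ∈ D.posRoots := hw₀long _ (alpha_pos j)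
  have h2 : -(w₀ (-(w₀ (D.α j)))) ∈ D.posRoots := hw₀long _ h1
  rw [hw₀.map_neg, neg_neg] at h2
  have h3 : (w0p * w₀ * w₀) (D.α j) = w0p (w₀ (w₀ (D.α j))) := rfl
  rw [h3, w0p_coeff hw0p]
  exact pos_coeff h2 i

include hw₀ hw₀long hw0p in
lemma hC_wi : ∀ γ ∈ D.posRoots, ⟪D.ϖ i, (w0p * w₀) γ⟫ ≤ 0 := by
  intro γ hγ
  have h1 : -(w₀ γ) ∈ D.posRoots := hw₀long _ hγ
  have h2 : (w0p * w₀) γ = -(w0p (-(w₀ γ))) := by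
    show w0p (w₀ γ) = _
    rw [(isW_w0p hw0p).map_neg, neg_neg]
  rw [h2, inner_neg_right, w0p_coeff hw0p]
  have := pos_coeff h1 i
  linarith

lemma len_ge {w : E ≃ᵃ[ℝ] E} (hw : IsW D w)
    (hC : ∀ γ ∈ D.posRoots, ⟪D.ϖ i, w γ⟫ ≤ 0) :
    Nat.card (Sset D i) ≤ D.len w := by
  haveI : Finite {x : E // x ∈ D.posRoots ∧ w x ∈ Neg.neg '' D.posRoots} := by
    refine Set.Finite.to_subtype (Set.Finite.subset D.Φ.finite_toSet ?_)
    intro x hx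
    exact pos_mem_Φ hx.1
  have key : ∀ γ : Sset D i, -(w.symm (γ : E)) ∈ D.posRoots ∧
      w (-(w.symm (γ : E))) ∈ Neg.neg '' D.posRoots := by
    rintro ⟨γ, hγP, hγc⟩
    have hx : w.symm γ ∈ D.Φ := hw.root_symm γ (pos_mem_Φ hγP)
    have hxnP : w.symm γ ∉ D.posRoots := by
      intro hc
      have := hC _ hc
      rw [AffineEquiv.apply_symm_apply] at this
      exact hγc (le_antisymm this (pos_coeff hγP i))
    have hneg : -(w.symm γ) ∈ D.posRoots := by
      rcases pos_or_neg_root hx with h | h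
      · exact absurd h hxnP
      · exact h
    refine ⟨hneg, ?_⟩
    rw [hw.map_neg, AffineEquiv.apply_symm_apply, mem_neg_image, neg_neg]
    exact hγP
  let f : Sset D i → {x : E // x ∈ D.posRoots ∧ w x ∈ Neg.neg '' D.posRoots} :=
    fun γ => ⟨-(w.symm (γ : E)), (key γ).1, (key γ).2⟩
  have hinj : Function.Injective f := by
    rintro ⟨a, ha⟩ ⟨b, hb⟩ hab
    have : -(w.symm a) = -(w.symm b) := congrArg Subtype.val hab
    have := w.symm.injective (neg_injective this)
    exact Subtype.ext this
  exact Nat.card_le_card_of_injective f hinj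

include hw₀ hw₀long hw0p hw0plong in
lemma len_wi_eq : D.len (w0p * w₀) = Nat.card (Sset D i) := by
  haveI : Finite (Sset D i) := Set.Finite.to_subtype Sset_finite
  have hwi : IsW D (w0p * w₀) := (isW_w0p hw0p).mul hw₀
  have happ : ∀ β : E, (w0p * w₀) β = w0p (w₀ β) := fun _ => rfl
  have key : ∀ x : {x : E // x ∈ D.posRoots ∧ (w0p * w₀) x ∈ Neg.neg '' D.posRoots},
      -(w₀ (x : E)) ∈ Sset D i := by
    rintro ⟨β, hβP, hβn⟩
    have hγP : -(w₀ β) ∈ D.posRoots := hw₀long β hβP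
    refine ⟨hγP, fun hc => ?_⟩
    have hγM : -(w₀ β) ∈ (Msub D i : Set E) := mem_M_iff.mpr hc
    have h4 : -(w0p (-(w₀ β))) ∈ D.posRoots := hw0plong _ ⟨hγP, hγM⟩
    have h5 : (w0p * w₀) β = -(w0p (-(w₀ β))) := by
      rw [happ]
      conv_lhs => rw [← neg_neg (w₀ β), (isW_w0p hw0p).map_neg]
    rw [mem_neg_image, h5, neg_neg] at hβn
    exact not_pos_and_neg hβn h4
  let e : {x : E // x ∈ D.posRoots ∧ (w0p * w₀) x ∈ Neg.neg '' D.posRoots} → Sset D i :=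
    fun x => ⟨-(w₀ (x : E)), key x⟩
  have hbij : Function.Bijective e := by
    constructor
    · rintro ⟨a, ha⟩ ⟨b, hb⟩ hab
      have : -(w₀ a) = -(w₀ b) := congrArg Subtype.val hab
      exact Subtype.ext (w₀.injective (neg_injective this))
    · rintro ⟨γ, hγP, hγc⟩
      obtain ⟨β, hβP, hβγ⟩ := w0_surj hw₀ hw₀long γ hγP
      have hwpγ : w0p γ ∈ D.posRoots := by
        refine pos_of_coeff_pos ((isW_w0p hw0p).root γ (pos_mem_Φ hγP)) (k := i) ?_
        rw [w0p_coeff hw0p]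
        exact lt_of_le_of_ne (pos_coeff hγP i) (Ne.symm hγc)
      have hβn : (w0p * w₀) β ∈ Neg.neg '' D.posRoots := by
        rw [mem_neg_image, happ]
        have : w₀ β = -γ := by rw [← hβγ, neg_neg]
        rw [this, (isW_w0p hw0p).map_neg, neg_neg]
        exact hwpγ
      exact ⟨⟨β, hβP, hβn⟩, Subtype.ext hβγ⟩
  exact Nat.card_eq_of_bijective e hbij

end Main2

section Main3

variable {D : KPData E r} {i : Fin r}

lemma phi_spec {w : E ≃ᵃ[ℝ] E} (hw : IsW D w)
    (hC : ∀ γ ∈ D.posRoots, ⟪D.ϖ i, w γ⟫ ≤ 0) {γ : E} (hγP : γ ∈ D.posRoots)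
    (hγc : ⟪D.ϖ i, γ⟫ ≠ 0) :
    -(w.symm γ) ∈ D.posRoots ∧ w (-(w.symm γ)) ∈ Neg.neg '' D.posRoots ∧
      w (-(w.symm γ)) = -γ := by
  have hx : w.symm γ ∈ D.Φ := hw.root_symm γ (pos_mem_Φ hγP)
  have hxnP : w.symm γ ∉ D.posRoots := by
    intro hc
    have := hC _ hc
    rw [AffineEquiv.apply_symm_apply] at this
    exact hγc (le_antisymm this (pos_coeff hγP i))
  have hneg : -(w.symm γ) ∈ D.posRoots := by
    rcases pos_or_neg_root hx with h | h
    · exact absurd h hxnP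
    · exact h
  have happ : w (-(w.symm γ)) = -γ := by
    rw [hw.map_neg, AffineEquiv.apply_symm_apply]
  exact ⟨hneg, by rw [happ, mem_neg_image, neg_neg]; exact hγP, happ⟩

lemma finite_Nw (D : KPData E r) (w : E ≃ᵃ[ℝ] E) :
    Finite {x : E // x ∈ D.posRoots ∧ w x ∈ Neg.neg '' D.posRoots} :=
  Set.Finite.to_subtype (Set.Finite.subset D.Φ.finite_toSet fun x hx => pos_mem_Φ hx.1)

lemma star_w {w : E ≃ᵃ[ℝ] E} (hw : IsW D w)
    (hC : ∀ γ ∈ D.posRoots, ⟪D.ϖ i, w γ⟫ ≤ 0)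
    (hlen : D.len w ≤ Nat.card (Sset D i)) :
    ∀ β ∈ D.posRoots, w β ∈ Neg.neg '' D.posRoots → ⟪D.ϖ i, w β⟫ ≠ 0 := by
  intro β₀ hβ₀ hβ₀n hzero
  haveI : Finite (Sset D i) := Sset_finite.to_subtype
  haveI := finite_Nw D w
  let f : Option (Sset D i) → {x : E // x ∈ D.posRoots ∧ w x ∈ Neg.neg '' D.posRoots} :=
    fun o => o.elim ⟨β₀, hβ₀, hβ₀n⟩ fun γ =>
      ⟨-(w.symm (γ : E)), (phi_spec hw hC γ.2.1 γ.2.2).1, (phi_spec hw hC γ.2.1 γ.2.2).2.1⟩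
  have hne : ∀ γ : Sset D i, -(w.symm (γ : E)) ≠ β₀ := by
    intro γ hc
    have h1 := (phi_spec hw hC γ.2.1 γ.2.2).2.2
    rw [hc] at h1
    rw [h1, inner_neg_right] at hzero
    exact γ.2.2 (by linarith [neg_eq_zero.mp hzero])
  have hinj : Function.Injective f := by
    intro a b hab
    match a, b with
    | none, none => rfl
    | some γ, some γ' =>
      have : -(w.symm (γ : E)) = -(w.symm (γ' : E)) := congrArg Subtype.val hab
      exact congrArg some (Subtype.ext (w.symm.injective (neg_injective this)))
    | some γ, none => exact absurd (congrArg Subtype.val hab) (hne γ)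
    | none, some γ => exact absurd (congrArg Subtype.val hab).symm (hne γ)
  have hcard := Nat.card_le_card_of_injective f hinj
  rw [Finite.card_option] at hcard
  have : D.len w = Nat.card {x : E // x ∈ D.posRoots ∧ w x ∈ Neg.neg '' D.posRoots} := rfl
  omega

variable {w₀ w0p : E ≃ᵃ[ℝ] E}
  (hw₀ : IsW D w₀)
  (hw₀long : ∀ x ∈ D.posRoots, -(w₀ x) ∈ D.posRoots)
  (hw0p : w0p ∈ Subgroup.closure
    {f | ∃ x ∈ (D.Φ : Set E) ∩ (Msub D i : Set E), f = refl x})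
  (hw0plong : ∀ x ∈ D.posRoots ∩ (Msub D i : Set E), -(w0p x) ∈ D.posRoots)

include hw₀long hw0p hw0plong in
lemma star_wi : ∀ β ∈ D.posRoots, (w0p * w₀) β ∈ Neg.neg '' D.posRoots →
    ⟪D.ϖ i, (w0p * w₀) β⟫ ≠ 0 := by
  intro β hβP hβn
  have hγP : -(w₀ β) ∈ D.posRoots := hw₀long β hβP
  have hγc : ⟪D.ϖ i, -(w₀ β)⟫ ≠ 0 := by
    intro hc
    have hγM : -(w₀ β) ∈ (Msub D i : Set E) := mem_M_iff.mpr hc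
    have h4 : -(w0p (-(w₀ β))) ∈ D.posRoots := hw0plong _ ⟨hγP, hγM⟩
    have h5 : (w0p * w₀) β = -(w0p (-(w₀ β))) := by
      show w0p (w₀ β) = _
      conv_lhs => rw [← neg_neg (w₀ β), (isW_w0p hw0p).map_neg]
    rw [mem_neg_image, h5, neg_neg] at hβn
    exact not_pos_and_neg hβn h4
  intro hc
  refine hγc ?_
  have : ⟪D.ϖ i, (w0p * w₀) β⟫ = ⟪D.ϖ i, w₀ β⟫ := by
    show ⟪D.ϖ i, w0p (w₀ β)⟫ = _
    exact w0p_coeff hw0p _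
  rw [this] at hc
  rw [inner_neg_right, hc, neg_zero]

end Main3

/-- For a minuscule index `i`, the element `w_i = w₀^i w₀` is the unique
element of minimal length of the Weyl group sending the chamber `w₀(𝒞₀)` to a region
containing `ϖ_i^∨`. -/
theorem wi_unique_minimal_length (D : KPData E r) (i : Fin r) (hi : D.n i = 1)
    (w₀ : E ≃ᵃ[ℝ] E) (hw₀ : w₀ ∈ D.weylGroup)
    (hw₀long : ∀ x ∈ D.posRoots, -(w₀ x) ∈ D.posRoots)
    (w0p : E ≃ᵃ[ℝ] E)
    (hw0p : w0p ∈ Subgroup.closure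
      {f | ∃ x ∈ (D.Φ : Set E) ∩ (Submodule.span ℝ (D.α '' {j | j ≠ i}) : Set E), f = refl x})
    (hw0plong : ∀ x ∈ D.posRoots ∩ (Submodule.span ℝ (D.α '' {j | j ≠ i}) : Set E),
      -(w0p x) ∈ D.posRoots) :
    (w0p * w₀ ∈ D.weylGroup ∧ D.ϖ i ∈ ⇑(w0p * w₀ * w₀) '' D.chamber) ∧
    (∀ w ∈ D.weylGroup, D.ϖ i ∈ ⇑(w * w₀) '' D.chamber → D.len (w0p * w₀) ≤ D.len w) ∧
    (∀ w ∈ D.weylGroup, D.ϖ i ∈ ⇑(w * w₀) '' D.chamber →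
      (∀ w' ∈ D.weylGroup, D.ϖ i ∈ ⇑(w' * w₀) '' D.chamber → D.len w ≤ D.len w') →
      w = w0p * w₀) := by
  clear hi
  have hw0pW : w0p ∈ D.weylGroup := by
    refine Subgroup.closure_mono ?_ hw0p
    rintro f ⟨x, ⟨hx1, _⟩, rfl⟩
    exact ⟨x, hx1, rfl⟩
  have hw₀' : IsW D w₀ := isW_of_mem_weylGroup hw₀
  have hwiW : w0p * w₀ ∈ D.weylGroup := mul_mem hw0pW hw₀
  have hwi : IsW D (w0p * w₀) := (isW_w0p hw0p).mul hw₀'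
  have hpart1 : D.ϖ i ∈ ⇑(w0p * w₀ * w₀) '' D.chamber :=
    (mem_image_chamber (hwi.mul hw₀')).mpr (cond_wi hw₀' hw₀long hw0p)
  have hCwi : ∀ γ ∈ D.posRoots, ⟪D.ϖ i, (w0p * w₀) γ⟫ ≤ 0 := hC_wi hw₀' hw₀long hw0p
  have hlenwi : D.len (w0p * w₀) = Nat.card (Sset D i) :=
    len_wi_eq hw₀' hw₀long hw0p hw0plong
  refine ⟨⟨hwiW, hpart1⟩, ?_, ?_⟩
  · intro w hwW hwc
    have hw : IsW D w := isW_of_mem_weylGroup hwW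
    have hC := C_of_cond hw₀' hw₀long hw ((mem_image_chamber (hw.mul hw₀')).mp hwc)
    rw [hlenwi]
    exact len_ge hw hC
  · intro w hwW hwc hmin
    have hw : IsW D w := isW_of_mem_weylGroup hwW
    have hC := C_of_cond hw₀' hw₀long hw ((mem_image_chamber (hw.mul hw₀')).mp hwc)
    have hminS : D.len w ≤ Nat.card (Sset D i) := by
      rw [← hlenwi]
      exact hmin (w0p * w₀) hwiW hpart1
    have hsw := star_w hw hC hminS
    have hswi := star_wi hw₀long hw0p hw0plong
    have hvW : (w0p * w₀)⁻¹ * w ∈ D.weylGroup := mul_mem (inv_mem hwiW) hwW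
    have hvapp : ∀ β : E, ((w0p * w₀)⁻¹ * w) β = (w0p * w₀).symm (w β) := fun _ => rfl
    have hvpos : ∀ β ∈ D.posRoots, ((w0p * w₀)⁻¹ * w) β ∈ D.posRoots := by
      intro β hβ
      rw [hvapp]
      by_cases h0 : ⟪D.ϖ i, w β⟫ = 0
      · have hwβΦ : w β ∈ D.Φ := hw.root β (pos_mem_Φ hβ)
        have hwβP : w β ∈ D.posRoots := by
          rcases pos_or_neg_root hwβΦ with h | h
          · exact h
          · exact absurd h0 (hsw β hβ (mem_neg_image.mpr h))
        have hyΦ : (w0p * w₀).symm (w β) ∈ D.Φ := hwi.root_symm _ hwβΦ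
        rcases pos_or_neg_root hyΦ with h | h
        · exact h
        · exfalso
          have happ2 : (w0p * w₀) (-((w0p * w₀).symm (w β))) = -(w β) := by
            rw [hwi.map_neg, AffineEquiv.apply_symm_apply]
          have hn : (w0p * w₀) (-((w0p * w₀).symm (w β))) ∈ Neg.neg '' D.posRoots := by
            rw [happ2, mem_neg_image, neg_neg]
            exact hwβP
          have hne0 := hswi _ h hn
          rw [happ2, inner_neg_right] at hne0
          exact hne0 (by rw [h0, neg_zero])
      · have hlt : ⟪D.ϖ i, w β⟫ < 0 := lt_of_le_of_ne (hC β hβ) h0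
        have hδ : -(w β) ∈ D.posRoots := neg_pos_of_coeff_neg (hw.root β (pos_mem_Φ hβ)) hlt
        have hzΦ : (w0p * w₀).symm (-(w β)) ∈ D.Φ := hwi.root_symm _ (pos_mem_Φ hδ)
        have hznP : (w0p * w₀).symm (-(w β)) ∉ D.posRoots := by
          intro hc
          have hc2 := hCwi _ hc
          rw [AffineEquiv.apply_symm_apply, inner_neg_right] at hc2
          linarith
        have hzneg : -((w0p * w₀).symm (-(w β))) ∈ D.posRoots := by
          rcases pos_or_neg_root hzΦ with h | h
          · exact absurd h hznP
          · exact h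
        have heq2 : (w0p * w₀).symm (w β) = -((w0p * w₀).symm (-(w β))) := by
          conv_lhs => rw [← neg_neg (w β), hwi.symm.map_neg]
        rw [heq2]
        exact hzneg
    have hv1 : (w0p * w₀)⁻¹ * w = 1 := pos_preserving_eq_one hvW hvpos
    exact (inv_mul_eq_one.mp hv1).symm
end
end

section
/- The vertices of the polytope F = {λ ∈ 𝒜₀ : ⟨λ, α₀ + α_j⟩ ≤ 1 for all j ∈ J} are exactly the points ϖ_i^∨/n_i for i ∈ I \ J together with all isobarycenters (1/(|J'|+1)) Σ_{j∈J'} ϖ_j^∨ over subsets J' ⊆ J (including the empty subset, giving the origin). -/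
open scoped RealInnerProductSpace Pointwise

noncomputable section

variable (E : Type) [NormedAddCommGroup E] [InnerProductSpace ℝ E] [FiniteDimensional ℝ E]

open KPData

variable {E} {r : ℕ}


set_option linter.unusedSectionVars false

namespace KPHelpers

variable (D : KPData E r)

lemma span_alpha : Submodule.span ℝ (Set.range D.α) = ⊤ := by
  rw [eq_top_iff, ← D.span_eq_top, Submodule.span_le]
  intro x hx
  rcases D.pos_or_neg x hx with ⟨c, _, hc⟩ | ⟨c, _, hc⟩
  · rw [hc]
    exact Submodule.sum_mem _ fun i _ =>
      Submodule.smul_mem _ _ (Submodule.subset_span ⟨i, rfl⟩)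
  · rw [hc]
    exact Submodule.neg_mem _ <| Submodule.sum_mem _ fun i _ =>
      Submodule.smul_mem _ _ (Submodule.subset_span ⟨i, rfl⟩)

lemma ext_of_inner {y z : E} (h : ∀ i, ⟪y, D.α i⟫ = ⟪z, D.α i⟫) : y = z := by
  have hyz : y - z ∈ (Submodule.span ℝ (Set.range D.α))ᗮ := by
    rw [Submodule.mem_orthogonal]
    intro u hu
    induction hu using Submodule.span_induction with
    | mem u hu =>
        obtain ⟨i, rfl⟩ := hu
        rw [inner_sub_right, real_inner_comm, h i, real_inner_comm, sub_self]
    | zero => simp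
    | add u v _ _ hu hv => rw [inner_add_left, hu, hv, add_zero]
    | smul c u _ hu => rw [inner_smul_left, hu, mul_zero]
  rw [span_alpha D, Submodule.top_orthogonal_eq_bot, Submodule.mem_bot, sub_eq_zero] at hyz
  exact hyz

lemma inner_alpha0 (x : E) : ⟪x, D.α₀⟫ = ∑ i, (D.n i : ℝ) * ⟪x, D.α i⟫ := by
  rw [D.α₀_eq, inner_sum]
  exact Finset.sum_congr rfl fun i _ => real_inner_smul_right _ _ _

lemma mem_KP_iff (x : E) : x ∈ D.KP ↔ (∀ i, 0 ≤ ⟪x, D.α i⟫) ∧ ⟪x, D.α₀⟫ ≤ 1 ∧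
    ∀ i, D.n i = 1 → ⟪x, D.α₀⟫ + ⟪x, D.α i⟫ ≤ 1 := by
  simp only [KPData.KP, KPData.alcove, Set.mem_setOf_eq, inner_add_right, and_assoc]

lemma inner_pi_alpha (i k : Fin r) : ⟪D.ϖ i, D.α k⟫ = if k = i then 1 else 0 := by
  rw [D.ϖ_pair]; simp [eq_comm]

lemma inner_sum_pi (s : Finset (Fin r)) (c : Fin r → ℝ) (k : Fin r) :
    ⟪∑ j ∈ s, c j • D.ϖ j, D.α k⟫ = if k ∈ s then c k else 0 := by
  rw [sum_inner]
  have : ∀ j ∈ s, ⟪c j • D.ϖ j, D.α k⟫ = if j = k then c j else 0 := by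
    intro j _
    rw [real_inner_smul_left, inner_pi_alpha]
    by_cases h : j = k
    · subst h; simp
    · rw [if_neg (fun h' => h h'.symm), if_neg h, mul_zero]
  rw [Finset.sum_congr rfl this, Finset.sum_ite_eq' s k c]


lemma sum_n_ite (i0 : Fin r) (c : ℝ) :
    ∑ j, (D.n j : ℝ) * (if j = i0 then c else 0) = (D.n i0 : ℝ) * c := by
  rw [Finset.sum_eq_single i0]
  · simp
  · intro b _ hb; simp [hb]
  · simp

lemma inner_sum_pi' (s : Finset (Fin r)) (k : Fin r) :
    ⟪∑ j ∈ s, D.ϖ j, D.α k⟫ = if k ∈ s then 1 else 0 := by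
  have h := inner_sum_pi D s (fun _ => (1:ℝ)) k
  simpa using h

lemma evsmall {a b c : ℝ} (h : a ≤ c) (h' : a = c → b = 0) :
    ∀ᶠ ε : ℝ in nhds 0, a + ε * b ≤ c := by
  rcases eq_or_lt_of_le h with he | hlt
  · filter_upwards with ε
    rw [h' he, mul_zero, add_zero, he]
  · have hcont : Filter.Tendsto (fun ε : ℝ => a + ε * b) (nhds 0) (nhds a) := by
      have h2 : Filter.Tendsto (fun ε : ℝ => a + ε * b) (nhds 0) (nhds (a + 0 * b)) :=
        tendsto_const_nhds.add (Filter.tendsto_id.mul tendsto_const_nhds)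
      simpa using h2
    exact (hcont.eventually_lt_const hlt).mono fun ε h => le_of_lt h

lemma evsmall' {a b : ℝ} (h : 0 ≤ a) (h' : a = 0 → b = 0) :
    ∀ᶠ ε : ℝ in nhds 0, 0 ≤ a + ε * b := by
  have h2 := evsmall (a := -a) (b := -b) (c := 0) (by linarith)
    (fun he => by rw [h' (by linarith), neg_zero])
  filter_upwards [h2] with ε hε
  nlinarith [hε]

lemma perturb (x v : E) (hx : x ∈ D.KP)
    (h0 : ∀ i, ⟪x, D.α i⟫ = 0 → ⟪v, D.α i⟫ = 0)
    (h1 : ⟪x, D.α₀⟫ = 1 → ⟪v, D.α₀⟫ = 0)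
    (h2 : ∀ i, D.n i = 1 → ⟪x, D.α₀⟫ + ⟪x, D.α i⟫ = 1 → ⟪v, D.α₀⟫ + ⟪v, D.α i⟫ = 0) :
    ∀ᶠ ε : ℝ in nhds 0, x + ε • v ∈ D.KP := by
  obtain ⟨ha, hb, hc⟩ := (mem_KP_iff D x).1 hx
  have hin : ∀ (ε : ℝ) (w : E), ⟪x + ε • v, w⟫ = ⟪x, w⟫ + ε * ⟪v, w⟫ := by
    intro ε w; rw [inner_add_left, real_inner_smul_left]
  simp only [mem_KP_iff, hin]
  refine Filter.Eventually.and ?_ (Filter.Eventually.and ?_ ?_)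
  · rw [Filter.eventually_all]
    intro i
    exact evsmall' (ha i) (h0 i)
  · exact evsmall hb h1
  · rw [Filter.eventually_all]
    intro i
    by_cases hni : D.n i = 1
    · have h3 := evsmall (a := ⟪x, D.α₀⟫ + ⟪x, D.α i⟫) (b := ⟪v, D.α₀⟫ + ⟪v, D.α i⟫)
        (c := 1) (hc i hni) (h2 i hni)
      filter_upwards [h3] with ε hε _
      have e : ε * (⟪v, D.α₀⟫ + ⟪v, D.α i⟫) = ε * ⟪v, D.α₀⟫ + ε * ⟪v, D.α i⟫ := mul_add _ _ _
      linarith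
    · filter_upwards with ε h
      exact absurd h hni

lemma extreme_zero (x v : E) (hx : x ∈ Set.extremePoints ℝ D.KP)
    (h0 : ∀ i, ⟪x, D.α i⟫ = 0 → ⟪v, D.α i⟫ = 0)
    (h1 : ⟪x, D.α₀⟫ = 1 → ⟪v, D.α₀⟫ = 0)
    (h2 : ∀ i, D.n i = 1 → ⟪x, D.α₀⟫ + ⟪x, D.α i⟫ = 1 → ⟪v, D.α₀⟫ + ⟪v, D.α i⟫ = 0) :
    v = 0 := by
  obtain ⟨hxK, hext⟩ := hx
  have hp := perturb D x v hxK h0 h1 h2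
  have hm := perturb D x (-v) hxK (fun i hi => by rw [inner_neg_left, h0 i hi, neg_zero])
    (fun h => by rw [inner_neg_left, h1 h, neg_zero])
    (fun i hni ht => by
      rw [inner_neg_left, inner_neg_left]
      have := h2 i hni ht; linarith)
  have h3 : ∀ᶠ ε : ℝ in nhdsWithin 0 {(0:ℝ)}ᶜ,
      ((x + ε • v ∈ D.KP ∧ x + ε • (-v) ∈ D.KP) ∧ ε ≠ 0) :=
    ((hp.and hm).filter_mono nhdsWithin_le_nhds).and
      (eventually_mem_nhdsWithin.mono fun ε h => h)
  obtain ⟨ε, ⟨hep, hem⟩, hεne⟩ := h3.exists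
  have hseg : x ∈ openSegment ℝ (x + ε • v) (x + ε • (-v)) := by
    refine ⟨1/2, 1/2, by norm_num, by norm_num, by norm_num, ?_⟩
    rw [smul_neg]
    rw [smul_add, smul_add, smul_neg]
    abel_nf
    module
  have h4 := hext hep hem hseg
  have h5 : ε • v = 0 := by
    have := congrArg (fun w => w - x) h4
    simpa using this
  rcases smul_eq_zero.1 h5 with h | h
  · exact absurd h hεne
  · exact h

lemma shape1 (i : Fin r) (w : E) (h0 : ∀ k, k ≠ i → ⟪w, D.α k⟫ = 0)
    (h1 : ⟪w, D.α₀⟫ = 1) : w = ((D.n i : ℝ))⁻¹ • D.ϖ i := by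
  have hni : (0:ℝ) < D.n i := by exact_mod_cast D.n_pos i
  have hkey : (D.n i : ℝ) * ⟪w, D.α i⟫ = 1 := by
    rw [← h1, inner_alpha0, Finset.sum_eq_single i
      (fun b _ hb => by rw [h0 b hb, mul_zero]) (by simp)]
  apply ext_of_inner D
  intro k
  rw [real_inner_smul_left, inner_pi_alpha]
  by_cases hk : k = i
  · subst hk
    rw [if_pos rfl, mul_one]
    field_simp
    linarith
  · rw [if_neg hk, mul_zero]
    exact h0 k hk

lemma shape2 (s : Finset (Fin r)) (hsJ : ∀ j ∈ s, D.n j = 1) (w : E)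
    (h0 : ∀ j, j ∉ s → ⟪w, D.α j⟫ = 0)
    (h1 : ∀ j ∈ s, ⟪w, D.α₀⟫ + ⟪w, D.α j⟫ = 1) :
    w = ((s.card : ℝ) + 1)⁻¹ • ∑ j ∈ s, D.ϖ j := by
  have hσ : ⟪w, D.α₀⟫ = (s.card : ℝ) * (1 - ⟪w, D.α₀⟫) := by
    conv_lhs => rw [inner_alpha0]
    rw [← Finset.sum_subset (Finset.subset_univ s)
      (fun j _ hj => by rw [h0 j hj, mul_zero])]
    rw [Finset.sum_congr rfl (fun j hj => show (D.n j : ℝ) * ⟪w, D.α j⟫ = 1 - ⟪w, D.α₀⟫ by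
      rw [hsJ j hj]
      have := h1 j hj
      push_cast
      linarith), Finset.sum_const, nsmul_eq_mul]
  have hcard : (0:ℝ) ≤ (s.card : ℝ) := Nat.cast_nonneg _
  have hval : 1 - ⟪w, D.α₀⟫ = ((s.card : ℝ) + 1)⁻¹ := by
    have hpos : (0:ℝ) < (s.card : ℝ) + 1 := by linarith
    rw [inv_eq_one_div, eq_div_iff (ne_of_gt hpos)]
    linear_combination -hσ
  apply ext_of_inner D
  intro k
  rw [real_inner_smul_left, inner_sum_pi']
  by_cases hk : k ∈ s
  · rw [if_pos hk, mul_one, ← hval]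
    have := h1 k hk
    linarith
  · rw [if_neg hk, mul_zero]
    exact h0 k hk

end KPHelpers

/-- The vertices (= extreme points) of the Komrakov–Premet polytope are the
points `ϖ_i^∨/n_i` for non-minuscule `i`, together with the isobarycenters
`(1/(|J'|+1)) Σ_{j∈J'} ϖ_j^∨` over sets `J'` of minuscule indices (including `J' = ∅`,
which gives the origin). -/
theorem KP_vertices (D : KPData E r) :
    Set.extremePoints ℝ D.KP =
      {x | ∃ i, D.n i ≠ 1 ∧ x = ((D.n i : ℝ))⁻¹ • D.ϖ i} ∪
      {x | ∃ s : Finset (Fin r), (∀ j ∈ s, D.n j = 1) ∧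
        x = ((s.card : ℝ) + 1)⁻¹ • ∑ j ∈ s, D.ϖ j} := by
  classical
  open KPHelpers in
  ext x
  simp only [Set.mem_union, Set.mem_setOf_eq]
  constructor
  · intro hx
    have hxK := hx.1
    obtain ⟨ht0, hσ1, htJ⟩ := (mem_KP_iff D x).1 hxK
    by_cases hσ : ⟪x, D.α₀⟫ = 1
    · left
      have hJ0 : ∀ j, D.n j = 1 → ⟪x, D.α j⟫ = 0 := fun j hj =>
        le_antisymm (by linarith [htJ j hj]) (ht0 j)
      have huniq : ∀ i k, i ≠ k → ⟪x, D.α i⟫ ≠ 0 → ⟪x, D.α k⟫ ≠ 0 → False := by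
        intro i k hik hi hk
        set v := (D.n k : ℝ) • D.ϖ i - (D.n i : ℝ) • D.ϖ k with hv
        have hvinner : ∀ j, ⟪v, D.α j⟫ =
            (if j = i then (D.n k : ℝ) else 0) - (if j = k then (D.n i : ℝ) else 0) := by
          intro j
          rw [hv, inner_sub_left, real_inner_smul_left, real_inner_smul_left,
            inner_pi_alpha, inner_pi_alpha]
          by_cases h1 : j = i <;> by_cases h2 : j = k <;> simp [h1, h2]
        have hv0 : ⟪v, D.α₀⟫ = 0 := by
          rw [inner_alpha0]
          have e : ∀ j : Fin r, j ∈ Finset.univ → (D.n j : ℝ) * ⟪v, D.α j⟫ =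
              (D.n j : ℝ) * (if j = i then (D.n k : ℝ) else 0)
              - (D.n j : ℝ) * (if j = k then (D.n i : ℝ) else 0) := by
            intro j _; rw [hvinner j]; ring
          rw [Finset.sum_congr rfl e, Finset.sum_sub_distrib, sum_n_ite, sum_n_ite]
          ring
        have hvz : v = 0 := extreme_zero D x v hx
          (fun j hj => by
            have hji : j ≠ i := fun h => hi (h ▸ hj)
            have hjk : j ≠ k := fun h => hk (h ▸ hj)
            rw [hvinner, if_neg hji, if_neg hjk, sub_zero])
          (fun _ => hv0)
          (fun j hj _ => by
            have hji : j ≠ i := fun h => hi (h ▸ hJ0 j hj)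
            have hjk : j ≠ k := fun h => hk (h ▸ hJ0 j hj)
            rw [hv0, hvinner, if_neg hji, if_neg hjk, sub_zero, add_zero])
        have hcon := hvinner i
        rw [hvz, inner_zero_left, if_pos rfl, if_neg hik] at hcon
        have hnk : (0:ℝ) < D.n k := by exact_mod_cast D.n_pos k
        linarith
      have hex : ∃ i, ⟪x, D.α i⟫ ≠ 0 := by
        by_contra h
        push_neg at h
        rw [inner_alpha0, Finset.sum_eq_zero (fun j _ => by rw [h j, mul_zero])] at hσ
        norm_num at hσ
      obtain ⟨i, hi⟩ := hex
      have hall0 : ∀ k, k ≠ i → ⟪x, D.α k⟫ = 0 := by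
        intro k hk
        by_contra h
        exact huniq i k (Ne.symm hk) hi h
      refine ⟨i, ?_, shape1 D i x hall0 hσ⟩
      intro hni1
      have h1 := htJ i hni1
      have hkey : (D.n i : ℝ) * ⟪x, D.α i⟫ = 1 := by
        rw [← hσ, inner_alpha0, Finset.sum_eq_single i
          (fun b _ hb => by rw [hall0 b hb, mul_zero]) (by simp)]
      rw [hni1] at hkey
      norm_num at hkey
      linarith
    · right
      have hσlt : ⟪x, D.α₀⟫ < 1 := lt_of_le_of_ne hσ1 hσ
      set T : Finset (Fin r) := Finset.univ.filter
        (fun j => D.n j = 1 ∧ ⟪x, D.α₀⟫ + ⟪x, D.α j⟫ = 1) with hT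
      have hkey : ∀ i, ⟪x, D.α i⟫ ≠ 0 → i ∈ T := by
        intro i hi
        by_contra hiT
        set m := (T.card : ℝ) with hm
        have hm0 : (0:ℝ) ≤ m := Nat.cast_nonneg _
        have hm1 : m + 1 ≠ 0 := by linarith
        set v := D.ϖ i - ∑ j ∈ T, ((D.n i : ℝ)/(m+1)) • D.ϖ j with hv
        have hvinner : ∀ k, ⟪v, D.α k⟫ =
            (if k = i then 1 else 0) - (if k ∈ T then (D.n i : ℝ)/(m+1) else 0) := by
          intro k
          rw [hv, inner_sub_left, inner_pi_alpha, inner_sum_pi]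
        have hTpos : ∀ j ∈ T, ⟪x, D.α j⟫ ≠ 0 := by
          intro j hj
          have h2 := (Finset.mem_filter.1 hj).2.2
          intro h
          rw [h] at h2
          linarith
        have hv0 : ⟪v, D.α₀⟫ = (D.n i : ℝ)/(m+1) := by
          rw [inner_alpha0]
          have e : ∀ j : Fin r, j ∈ Finset.univ → (D.n j : ℝ) * ⟪v, D.α j⟫ =
              (D.n j : ℝ) * (if j = i then 1 else 0)
              - (if j ∈ T then (D.n i : ℝ)/(m+1) else 0) := by
            intro j _
            rw [hvinner j, mul_sub]
            congr 1
            by_cases hj : j ∈ T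
            · rw [if_pos hj, (Finset.mem_filter.1 hj).2.1, Nat.cast_one, one_mul]
            · rw [if_neg hj, mul_zero]
          rw [Finset.sum_congr rfl e, Finset.sum_sub_distrib, sum_n_ite,
            Finset.sum_ite_mem, Finset.univ_inter, Finset.sum_const, nsmul_eq_mul, ← hm]
          field_simp
          ring
        have hvz : v = 0 := extreme_zero D x v hx
          (fun k hk => by
            have hki : k ≠ i := fun h => hi (h ▸ hk)
            have hkT : k ∉ T := fun h => hTpos k h hk
            rw [hvinner, if_neg hki, if_neg hkT, sub_zero])
          (fun h => absurd h hσ)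
          (fun j hj ht => by
            have hjT : j ∈ T := Finset.mem_filter.2 ⟨Finset.mem_univ j, hj, ht⟩
            have hji : j ≠ i := fun h => hiT (h ▸ hjT)
            rw [hv0, hvinner, if_neg hji, if_pos hjT]
            ring)
        have hcon := hvinner i
        rw [hvz, inner_zero_left, if_pos rfl, if_neg hiT] at hcon
        norm_num at hcon
      exact ⟨T, fun j hj => (Finset.mem_filter.1 hj).2.1,
        shape2 D T (fun j hj => (Finset.mem_filter.1 hj).2.1) x
          (fun j hj => by
            by_contra h
            exact hj (hkey j h))
          (fun j hj => (Finset.mem_filter.1 hj).2.2)⟩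
  · rintro (⟨i, hni, rfl⟩ | ⟨s, hsJ, rfl⟩)
    · have hni0 : (0:ℝ) < D.n i := by exact_mod_cast D.n_pos i
      have hxi : ∀ k, ⟪((D.n i : ℝ))⁻¹ • D.ϖ i, D.α k⟫ =
          if k = i then (D.n i : ℝ)⁻¹ else 0 := by
        intro k
        rw [real_inner_smul_left, inner_pi_alpha]
        by_cases h : k = i <;> simp [h]
      have hσx : ⟪((D.n i : ℝ))⁻¹ • D.ϖ i, D.α₀⟫ = 1 := by
        rw [inner_alpha0, Finset.sum_congr rfl (fun j _ => by rw [hxi j]), sum_n_ite,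
          mul_inv_cancel₀ (ne_of_gt hni0)]
      have hmem : ((D.n i : ℝ))⁻¹ • D.ϖ i ∈ D.KP := by
        rw [mem_KP_iff]
        refine ⟨?_, hσx.le, fun j hj => ?_⟩
        · intro k
          rw [hxi k]
          split
          · positivity
          · exact le_rfl
        · have hji : j ≠ i := fun h => hni (h ▸ hj)
          rw [hσx, hxi j, if_neg hji]
          norm_num
      refine ⟨hmem, ?_⟩
      intro y hy z hz hseg
      obtain ⟨a, b, ha, hb, hab, habx⟩ := hseg
      have hcomb : ∀ w : E, a * ⟪y, w⟫ + b * ⟪z, w⟫ = ⟪((D.n i : ℝ))⁻¹ • D.ϖ i, w⟫ := by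
        intro w
        rw [← habx, inner_add_left, real_inner_smul_left, real_inner_smul_left]
      obtain ⟨hy0, hyσ, hyJ⟩ := (mem_KP_iff D y).1 hy
      obtain ⟨hz0, hzσ, hzJ⟩ := (mem_KP_iff D z).1 hz
      have hzero : ∀ k, k ≠ i → ⟪y, D.α k⟫ = 0 ∧ ⟪z, D.α k⟫ = 0 := by
        intro k hk
        have hc := hcomb (D.α k)
        rw [hxi k, if_neg hk] at hc
        exact ⟨le_antisymm (by nlinarith [mul_nonneg hb.le (hz0 k)]) (hy0 k),
          le_antisymm (by nlinarith [mul_nonneg ha.le (hy0 k)]) (hz0 k)⟩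
      have hone : ⟪y, D.α₀⟫ = 1 ∧ ⟪z, D.α₀⟫ = 1 := by
        have hc := hcomb D.α₀
        rw [hσx] at hc
        exact ⟨le_antisymm hyσ (by nlinarith [mul_nonneg hb.le (sub_nonneg.2 hzσ)]),
          le_antisymm hzσ (by nlinarith [mul_nonneg ha.le (sub_nonneg.2 hyσ)])⟩
      exact shape1 D i y (fun k hk => (hzero k hk).1) hone.1
    · have hc1 : (0:ℝ) < (s.card : ℝ) + 1 := by positivity
      have hinv : ((s.card : ℝ) + 1) * ((s.card : ℝ) + 1)⁻¹ = 1 :=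
        mul_inv_cancel₀ (ne_of_gt hc1)
      have hxi : ∀ k, ⟪((s.card : ℝ) + 1)⁻¹ • ∑ j ∈ s, D.ϖ j, D.α k⟫ =
          if k ∈ s then ((s.card : ℝ) + 1)⁻¹ else 0 := by
        intro k
        rw [real_inner_smul_left, inner_sum_pi']
        by_cases h : k ∈ s <;> simp [h]
      have hσx : ⟪((s.card : ℝ) + 1)⁻¹ • ∑ j ∈ s, D.ϖ j, D.α₀⟫ =
          (s.card : ℝ) * ((s.card : ℝ) + 1)⁻¹ := by
        rw [inner_alpha0, Finset.sum_congr rfl (fun j _ => by rw [hxi j])]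
        have e : ∀ j : Fin r, j ∈ Finset.univ → (D.n j : ℝ) *
            (if j ∈ s then ((s.card : ℝ) + 1)⁻¹ else 0) =
            (if j ∈ s then ((s.card : ℝ) + 1)⁻¹ else 0) := by
          intro j _
          by_cases hj : j ∈ s
          · rw [if_pos hj, hsJ j hj, Nat.cast_one, one_mul]
          · rw [if_neg hj, mul_zero]
        rw [Finset.sum_congr rfl e, Finset.sum_ite_mem, Finset.univ_inter,
          Finset.sum_const, nsmul_eq_mul]
      have hmem : ((s.card : ℝ) + 1)⁻¹ • ∑ j ∈ s, D.ϖ j ∈ D.KP := by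
        rw [mem_KP_iff]
        refine ⟨?_, by rw [hσx]; linarith [hinv, inv_nonneg.2 hc1.le], fun j hj => ?_⟩
        · intro k
          rw [hxi k]
          split
          · positivity
          · exact le_rfl
        · rw [hσx, hxi j]
          by_cases hjs : j ∈ s
          · rw [if_pos hjs]; linarith [hinv]
          · rw [if_neg hjs]; linarith [hinv, inv_nonneg.2 hc1.le]
      refine ⟨hmem, ?_⟩
      intro y hy z hz hseg
      obtain ⟨a, b, ha, hb, hab, habx⟩ := hseg
      have hcomb : ∀ w : E, a * ⟪y, w⟫ + b * ⟪z, w⟫ =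
          ⟪((s.card : ℝ) + 1)⁻¹ • ∑ j ∈ s, D.ϖ j, w⟫ := by
        intro w
        rw [← habx, inner_add_left, real_inner_smul_left, real_inner_smul_left]
      obtain ⟨hy0, hyσ, hyJ⟩ := (mem_KP_iff D y).1 hy
      obtain ⟨hz0, hzσ, hzJ⟩ := (mem_KP_iff D z).1 hz
      have hzero : ∀ k, k ∉ s → ⟪y, D.α k⟫ = 0 ∧ ⟪z, D.α k⟫ = 0 := by
        intro k hk
        have hc := hcomb (D.α k)
        rw [hxi k, if_neg hk] at hc
        exact ⟨le_antisymm (by nlinarith [mul_nonneg hb.le (hz0 k)]) (hy0 k),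
          le_antisymm (by nlinarith [mul_nonneg ha.le (hy0 k)]) (hz0 k)⟩
      have hone : ∀ j ∈ s, (⟪y, D.α₀⟫ + ⟪y, D.α j⟫ = 1) ∧ (⟪z, D.α₀⟫ + ⟪z, D.α j⟫ = 1) := by
        intro j hj
        have hc0 := hcomb D.α₀
        have hcj := hcomb (D.α j)
        rw [hσx] at hc0
        rw [hxi j, if_pos hj] at hcj
        have hcsum : a * (⟪y, D.α₀⟫ + ⟪y, D.α j⟫) + b * (⟪z, D.α₀⟫ + ⟪z, D.α j⟫) = 1 := by
          have : (s.card : ℝ) * ((s.card : ℝ) + 1)⁻¹ + ((s.card : ℝ) + 1)⁻¹ = 1 := by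
            linarith [hinv]
          nlinarith [hc0, hcj]
        have hyle := hyJ j (hsJ j hj)
        have hzle := hzJ j (hsJ j hj)
        exact ⟨le_antisymm hyle (by nlinarith [mul_nonneg hb.le (sub_nonneg.2 hzle)]),
          le_antisymm hzle (by nlinarith [mul_nonneg ha.le (sub_nonneg.2 hyle)])⟩
      exact shape2 D s hsJ y (fun k hk => (hzero k hk).1) (fun j hj => (hone j hj).1)
end
end
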